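/- arXiv:1804.02811 — 5 statements merged into one kernel-verified Lean document; each statement's English description precedes it below -/
import Mathlib

section
/- Let p ≥ 1 and let γ : ℝ → ℝ^p be five times continuously differentiable on a neighborhood of 0 with ‖γ′(s)‖ = 1 for all s in that neighborhood. Then, as t → 0⁺, ‖γ(t) − γ(0)‖ = t − (‖γ″(0)‖²/24)·t³ − (⟨γ‴(0), γ″(0)⟩/24)·t⁴ + O(t⁵). -/
open Asymptotics Filter Topology Set
open scoped RealInnerProductSpace

variable {E : Type*} [NormedAddCommGroup E] [NormedSpace ℝ E]

theorem eqOn_iteratedDerivWithin_of_isOpen (f : ℝ → E) (k : ℕ) {o : Set ℝ} (ho : IsOpen o) :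
    Set.EqOn (iteratedDerivWithin k f o) (iteratedDeriv k f) o := by
  intro x hx
  rw [iteratedDerivWithin_eq_iteratedFDerivWithin, iteratedDeriv_eq_iteratedFDeriv,
    iteratedFDerivWithin_of_isOpen k ho hx]

theorem diffAt_iteratedDeriv_aux {f : ℝ → E} {o : Set ℝ} (ho : IsOpen o)
    (hf : ContDiffOn ℝ 5 f o) {j : ℕ} (hj : j < 5) {x : ℝ} (hx : x ∈ o) :
    DifferentiableAt ℝ (iteratedDeriv j f) x := by
  have h1 : DifferentiableOn ℝ (iteratedDerivWithin j f o) o :=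
    hf.differentiableOn_iteratedDerivWithin (by exact_mod_cast hj) ho.uniqueDiffOn
  have h2 : DifferentiableAt ℝ (iteratedDerivWithin j f o) x :=
    (h1 x hx).differentiableAt (ho.mem_nhds hx)
  have heq : iteratedDerivWithin j f o =ᶠ[𝓝 x] iteratedDeriv j f :=
    Filter.eventually_of_mem (ho.mem_nhds hx) (eqOn_iteratedDerivWithin_of_isOpen f j ho)
  exact (Filter.EventuallyEq.differentiableAt_iff heq).mp h2

theorem iteratedDerivWithin_Icc_eq (f : ℝ → E) {o : Set ℝ} (ho : IsOpen o)
    (hf : ContDiffOn ℝ 5 f o) {a b : ℝ} (hab : a < b) (hsub : Set.Icc a b ⊆ o) :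
    ∀ k : ℕ, k < 5 →
      Set.EqOn (iteratedDerivWithin k f (Set.Icc a b)) (iteratedDeriv k f) (Set.Icc a b) := by
  intro k
  induction k with
  | zero => intro _ x hx; simp
  | succ n ih =>
    intro hk x hx
    have hn : n < 5 := Nat.lt_of_succ_lt hk
    have hu : UniqueDiffWithinAt ℝ (Set.Icc a b) x := uniqueDiffOn_Icc hab x hx
    rw [iteratedDerivWithin_succ, iteratedDeriv_succ,
      derivWithin_congr (ih hn) (ih hn hx)]
    exact DifferentiableAt.derivWithin (diffAt_iteratedDeriv_aux ho hf hn (hsub hx)) hu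

set_option maxHeartbeats 1600000 in
/-- For a unit-speed (arc-length parametrized) `C^5` curve
`γ : ℝ → ℝ^p` near `0`, as `t → 0⁺`,
`‖γ(t) − γ(0)‖ = t − (‖γ″(0)‖²/24)·t³ − (⟨γ‴(0), γ″(0)⟩/24)·t⁴ + O(t⁵)`. -/
theorem euclidean_distance_expansion_of_arclength_curve
    (p : ℕ) (hp : 1 ≤ p) (γ : ℝ → EuclideanSpace ℝ (Fin p))
    (U : Set ℝ) (hU : U ∈ 𝓝 (0 : ℝ)) (hγ : ContDiffOn ℝ 5 γ U)
    (harc : ∀ s ∈ U, ‖deriv γ s‖ = 1) :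
    (fun t : ℝ => ‖γ t - γ 0‖ -
        (t - (‖iteratedDeriv 2 γ 0‖ ^ 2 / 24) * t ^ 3
           - (⟪iteratedDeriv 3 γ 0, iteratedDeriv 2 γ 0⟫ / 24) * t ^ 4))
      =O[𝓝[>] (0 : ℝ)] fun t => t ^ 5 := by
  classical
  set o : Set ℝ := interior U with ho_def
  have ho : IsOpen o := isOpen_interior
  have h0o : (0 : ℝ) ∈ o := mem_interior_iff_mem_nhds.mpr hU
  have hγo : ContDiffOn ℝ 5 γ o := hγ.mono interior_subset
  obtain ⟨r, hr0, hball⟩ := Metric.isOpen_iff.mp ho 0 h0o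
  set ε : ℝ := min (r / 2) 1 with hε_def
  have hε0 : 0 < ε := lt_min (by linarith) one_pos
  have hε1 : ε ≤ 1 := min_le_right _ _
  have hIcc : Set.Icc 0 ε ⊆ o := by
    intro x hx
    apply hball
    rw [Metric.mem_ball, Real.dist_eq, sub_zero, abs_of_nonneg hx.1]
    have := hx.2
    have : x ≤ r / 2 := le_trans this (min_le_left _ _)
    linarith
  -- iterated derivative abbreviations
  set v1 := iteratedDeriv 1 γ 0 with hv1
  set v2 := iteratedDeriv 2 γ 0 with hv2
  set v3 := iteratedDeriv 3 γ 0 with hv3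
  set v4 := iteratedDeriv 4 γ 0 with hv4
  -- HasDerivAt for iterated derivatives on o
  have hHD : ∀ j : ℕ, j < 5 → ∀ x ∈ o,
      HasDerivAt (iteratedDeriv j γ) (iteratedDeriv (j + 1) γ x) x := by
    intro j hj x hx
    have h := (diffAt_iteratedDeriv_aux ho hγo hj hx).hasDerivAt
    rwa [iteratedDeriv_succ]
  -- derivative of locally constant real function is 0
  have derivzero : ∀ (F : ℝ → ℝ) (c : ℝ), (∀ s ∈ o, F s = c) → ∀ s ∈ o, deriv F s = 0 := by
    intro F c hF s hs
    have h : F =ᶠ[𝓝 s] fun _ => c := Filter.eventually_of_mem (ho.mem_nhds hs) hF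
    rw [h.deriv_eq, deriv_const]
  -- unit speed identities
  have hA : ∀ s ∈ o, ⟪iteratedDeriv 1 γ s, iteratedDeriv 1 γ s⟫ = 1 := by
    intro s hs
    rw [real_inner_self_eq_norm_sq, iteratedDeriv_one, harc s (interior_subset hs)]
    norm_num
  have hB : ∀ s ∈ o, ⟪iteratedDeriv 2 γ s, iteratedDeriv 1 γ s⟫ = 0 := by
    intro s hs
    have hd := (HasDerivAt.inner ℝ (hHD 1 (by norm_num) s hs) (hHD 1 (by norm_num) s hs)).deriv
    have h0 := derivzero _ 1 hA s hs
    rw [h0] at hd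
    simp only [show (1:ℕ)+1 = 2 from rfl] at hd
    have hc := real_inner_comm (iteratedDeriv 1 γ s) (iteratedDeriv 2 γ s)
    linarith
  have hC : ∀ s ∈ o, ⟪iteratedDeriv 3 γ s, iteratedDeriv 1 γ s⟫
      + ⟪iteratedDeriv 2 γ s, iteratedDeriv 2 γ s⟫ = 0 := by
    intro s hs
    have hd := (HasDerivAt.inner ℝ (hHD 2 (by norm_num) s hs) (hHD 1 (by norm_num) s hs)).deriv
    have h0 := derivzero _ 0 hB s hs
    rw [h0] at hd
    simp only [show (2:ℕ)+1 = 3 from rfl, show (1:ℕ)+1 = 2 from rfl] at hd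
    linarith
  have hD4 : ∀ s ∈ o, ⟪iteratedDeriv 4 γ s, iteratedDeriv 1 γ s⟫
      + 3 * ⟪iteratedDeriv 3 γ s, iteratedDeriv 2 γ s⟫ = 0 := by
    intro s hs
    have hd1 := HasDerivAt.inner ℝ (hHD 3 (by norm_num) s hs) (hHD 1 (by norm_num) s hs)
    have hd2 := HasDerivAt.inner ℝ (hHD 2 (by norm_num) s hs) (hHD 2 (by norm_num) s hs)
    have hd := (hd1.add hd2).deriv
    have h0 := derivzero _ 0 hC s hs
    simp only [Pi.add_def] at hd
    rw [h0] at hd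
    simp only [show (3:ℕ)+1 = 4 from rfl, show (2:ℕ)+1 = 3 from rfl,
      show (1:ℕ)+1 = 2 from rfl] at hd
    have hc := real_inner_comm (iteratedDeriv 2 γ s) (iteratedDeriv 3 γ s)
    linarith
  -- Taylor expansion
  have hγIcc : ContDiffOn ℝ ((4:ℕ) + 1) γ (Set.Icc 0 ε) := by
    exact_mod_cast hγo.mono hIcc
  obtain ⟨C₀, hC₀⟩ := exists_taylor_mean_remainder_bound (n := 4) hε0.le hγIcc
  have h0m : (0:ℝ) ∈ Set.Icc 0 ε := Set.left_mem_Icc.mpr hε0.le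
  have e0 := iteratedDerivWithin_Icc_eq γ ho hγo hε0 hIcc 0 (by norm_num) h0m
  have e1 := iteratedDerivWithin_Icc_eq γ ho hγo hε0 hIcc 1 (by norm_num) h0m
  have e2 := iteratedDerivWithin_Icc_eq γ ho hγo hε0 hIcc 2 (by norm_num) h0m
  have e3 := iteratedDerivWithin_Icc_eq γ ho hγo hε0 hIcc 3 (by norm_num) h0m
  have e4 := iteratedDerivWithin_Icc_eq γ ho hγo hε0 hIcc 4 (by norm_num) h0m
  have htw : ∀ x : ℝ, taylorWithinEval γ 4 (Set.Icc 0 ε) 0 x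
      = γ 0 + x • v1 + (x ^ 2 / 2) • v2 + (x ^ 3 / 6) • v3 + (x ^ 4 / 24) • v4 := by
    intro x
    rw [taylor_within_apply, Finset.sum_range_succ, Finset.sum_range_succ,
      Finset.sum_range_succ, Finset.sum_range_succ, Finset.sum_range_one,
      e0, e1, e2, e3, e4]
    simp only [Nat.factorial, iteratedDeriv_zero, ← hv1, ← hv2, ← hv3, ← hv4]
    push_cast
    match_scalars <;> ring
  set Pf : ℝ → EuclideanSpace ℝ (Fin p) := fun t =>
    t • v1 + (t ^ 2 / 2) • v2 + (t ^ 3 / 6) • v3 + (t ^ 4 / 24) • v4 with hPf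
  set C : ℝ := |C₀| with hCdef
  have hCnn : 0 ≤ C := abs_nonneg _
  have hR : ∀ t ∈ Set.Icc (0:ℝ) ε, ‖γ t - γ 0 - Pf t‖ ≤ C * t ^ 5 := by
    intro t ht
    have h := hC₀ t ht
    rw [htw t] at h
    norm_num at h
    have he : γ t - (γ 0 + t • v1 + (t ^ 2 / 2) • v2 + (t ^ 3 / 6) • v3 + (t ^ 4 / 24) • v4)
        = γ t - γ 0 - Pf t := by simp only [hPf]; abel
    rw [he] at h
    have h2 : C₀ * t ^ 5 ≤ C * t ^ 5 :=
      mul_le_mul_of_nonneg_right (le_abs_self C₀) (pow_nonneg ht.1 5)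
    linarith
  -- inner product identities at 0
  have e11 : ⟪v1, v1⟫ = 1 := hA 0 h0o
  have e21 : ⟪v2, v1⟫ = 0 := hB 0 h0o
  have e12 : ⟪v1, v2⟫ = 0 := by rw [real_inner_comm]; exact e21
  set m : ℝ := ⟪v2, v2⟫ with hm
  set n : ℝ := ⟪v3, v2⟫ with hn
  have e22 : ⟪v2, v2⟫ = m := hm.symm
  have e32 : ⟪v3, v2⟫ = n := hn.symm
  have e31 : ⟪v3, v1⟫ = -m := by have := hC 0 h0o; linarith
  have e13 : ⟪v1, v3⟫ = -m := by rw [real_inner_comm]; exact e31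
  have e41 : ⟪v4, v1⟫ = -(3*n) := by
    have h := hD4 0 h0o
    have h2 : ⟪iteratedDeriv 3 γ 0, iteratedDeriv 2 γ 0⟫ = n := e32
    linarith
  have e14 : ⟪v1, v4⟫ = -(3*n) := by rw [real_inner_comm]; exact e41
  have e23 : ⟪v2, v3⟫ = n := (real_inner_comm v3 v2).trans e32
  have e42 : ⟪v4, v2⟫ = ⟪v2, v4⟫ := real_inner_comm _ _
  have e43 : ⟪v4, v3⟫ = ⟪v3, v4⟫ := real_inner_comm _ _
  have hPP : ∀ t : ℝ, ⟪Pf t, Pf t⟫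
      = t ^ 2 - m / 12 * t ^ 4 - n / 12 * t ^ 5
        + (⟪v2, v4⟫ / 24 + ⟪v3, v3⟫ / 36) * t ^ 6
        + (⟪v3, v4⟫ / 72) * t ^ 7 + (⟪v4, v4⟫ / 576) * t ^ 8 := by
    intro t
    simp only [hPf, inner_add_left, inner_add_right, real_inner_smul_left,
      real_inner_smul_right, e11, e12, e21, e13, e31, e14, e41, e22, e23, e32, e42, e43]
    ring
  -- constants
  set M1 : ℝ := ‖v1‖ + ‖v2‖ + ‖v3‖ + ‖v4‖ with hM1def
  have hM1 : 0 ≤ M1 := by rw [hM1def]; positivity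
  set K1 : ℝ := |⟪v2, v4⟫ / 24 + ⟪v3, v3⟫ / 36 - m ^ 2 / 576|
      + |⟪v3, v4⟫ / 72 - m * n / 288| + |⟪v4, v4⟫ / 576 - n ^ 2 / 576| with hK1def
  set Ktot : ℝ := K1 + 2 * (M1 * C) + C ^ 2 with hKtotdef
  rw [isBigO_iff]
  refine ⟨2 * Ktot, ?_⟩
  have hev1 : Set.Ioc (0:ℝ) ε ∈ 𝓝[>] (0:ℝ) := Ioc_mem_nhdsGT_of_mem ⟨le_refl 0, hε0⟩
  have hcont : Continuous fun t : ℝ => m / 24 * t ^ 2 + n / 24 * t ^ 3 :=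
    (continuous_const.mul (continuous_pow 2)).add (continuous_const.mul (continuous_pow 3))
  have htd : Tendsto (fun t : ℝ => m / 24 * t ^ 2 + n / 24 * t ^ 3) (𝓝[>] (0:ℝ)) (𝓝 0) := by
    have h := (hcont.tendsto 0).mono_left (nhdsWithin_le_nhds : 𝓝[>] (0:ℝ) ≤ 𝓝 0)
    simpa using h
  have hev2 : ∀ᶠ t in 𝓝[>] (0:ℝ), m / 24 * t ^ 2 + n / 24 * t ^ 3 < 1 / 2 :=
    htd.eventually_lt_const (by norm_num)
  have hmv : ‖v2‖ ^ 2 = m := (real_inner_self_eq_norm_sq v2).symm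
  filter_upwards [hev1, hev2] with t ht hhalf
  obtain ⟨ht0, htε⟩ := ht
  have ht1 : t ≤ 1 := le_trans htε hε1
  rw [Real.norm_eq_abs, Real.norm_eq_abs, hmv, abs_of_pos (pow_pos ht0 5)]
  set Nt : ℝ := ‖γ t - γ 0‖ with hNt
  set Qt : ℝ := t - m / 24 * t ^ 3 - n / 24 * t ^ 4 with hQt
  set Rt : EuclideanSpace ℝ (Fin p) := γ t - γ 0 - Pf t with hRteq
  have hRt : ‖Rt‖ ≤ C * t ^ 5 := hR t ⟨ht0.le, htε⟩
  clear_value Nt Qt Rt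
  have hQge : t / 2 ≤ Qt := by
    rw [hQt]
    have hpos : (0:ℝ) ≤ t * (1/2 - (m/24*t^2 + n/24*t^3)) :=
      mul_nonneg ht0.le (by linarith)
    have hid : t * (1/2 - (m/24*t^2 + n/24*t^3))
        = t - m / 24 * t ^ 3 - n / 24 * t ^ 4 - t / 2 := by ring
    linarith
  have hsplit : γ t - γ 0 = Pf t + Rt := by rw [hRteq]; abel
  have hN0 : 0 ≤ Nt := hNt ▸ norm_nonneg _
  have hN2 : Nt ^ 2 = ⟪Pf t, Pf t⟫ + 2 * ⟪Pf t, Rt⟫ + ⟪Rt, Rt⟫ := by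
    have h1 : Nt = ‖Pf t + Rt‖ := by rw [hNt]; exact congrArg norm hsplit
    rw [h1, ← real_inner_self_eq_norm_sq]
    simp only [inner_add_left, inner_add_right]
    rw [real_inner_comm Rt (Pf t)]
    ring
  have hPb : ‖Pf t‖ ≤ M1 * t := by
    simp only [hPf]
    have p2 : t ^ 2 ≤ t := by
      calc t ^ 2 ≤ t ^ 1 := pow_le_pow_of_le_one ht0.le ht1 one_le_two
        _ = t := pow_one t
    have p3 : t ^ 3 ≤ t := by
      calc t ^ 3 ≤ t ^ 1 := pow_le_pow_of_le_one ht0.le ht1 (by norm_num)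
        _ = t := pow_one t
    have p4 : t ^ 4 ≤ t := by
      calc t ^ 4 ≤ t ^ 1 := pow_le_pow_of_le_one ht0.le ht1 (by norm_num)
        _ = t := pow_one t
    have b1 : ‖t • v1‖ = t * ‖v1‖ := by rw [norm_smul, Real.norm_eq_abs, abs_of_pos ht0]
    have b2 : ‖(t ^ 2 / 2) • v2‖ ≤ t * ‖v2‖ := by
      rw [norm_smul, Real.norm_eq_abs, abs_of_pos (by positivity)]
      apply mul_le_mul_of_nonneg_right _ (norm_nonneg _)
      linarith
    have b3 : ‖(t ^ 3 / 6) • v3‖ ≤ t * ‖v3‖ := by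
      rw [norm_smul, Real.norm_eq_abs, abs_of_pos (by positivity)]
      apply mul_le_mul_of_nonneg_right _ (norm_nonneg _)
      linarith
    have b4 : ‖(t ^ 4 / 24) • v4‖ ≤ t * ‖v4‖ := by
      rw [norm_smul, Real.norm_eq_abs, abs_of_pos (by positivity)]
      apply mul_le_mul_of_nonneg_right _ (norm_nonneg _)
      linarith
    have hna : ‖Pf t‖ ≤ ‖t • v1 + (t ^ 2 / 2) • v2 + (t ^ 3 / 6) • v3‖ + ‖(t ^ 4 / 24) • v4‖ :=
      norm_add_le _ _
    have hnb : ‖t • v1 + (t ^ 2 / 2) • v2 + (t ^ 3 / 6) • v3‖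
        ≤ ‖t • v1 + (t ^ 2 / 2) • v2‖ + ‖(t ^ 3 / 6) • v3‖ := norm_add_le _ _
    have hnc : ‖t • v1 + (t ^ 2 / 2) • v2‖ ≤ ‖t • v1‖ + ‖(t ^ 2 / 2) • v2‖ := norm_add_le _ _
    have hM : M1 * t = t * ‖v1‖ + t * ‖v2‖ + t * ‖v3‖ + t * ‖v4‖ := by rw [hM1def]; ring
    rw [hM]
    linarith
  have hPR : |⟪Pf t, Rt⟫| ≤ M1 * t * (C * t ^ 5) :=
    (abs_real_inner_le_norm _ _).trans
      (mul_le_mul hPb hRt (norm_nonneg _) (mul_nonneg hM1 ht0.le))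
  have hRR1 : ⟪Rt, Rt⟫ ≤ (C * t ^ 5) ^ 2 := by
    rw [real_inner_self_eq_norm_sq]
    exact pow_le_pow_left₀ (norm_nonneg _) hRt 2
  have hRR0 : (0:ℝ) ≤ ⟪Rt, Rt⟫ := real_inner_self_nonneg
  have hdiff6 : ⟪Pf t, Pf t⟫ - Qt ^ 2
      = (⟪v2, v4⟫ / 24 + ⟪v3, v3⟫ / 36 - m ^ 2 / 576) * t ^ 6
        + (⟪v3, v4⟫ / 72 - m * n / 288) * t ^ 7
        + (⟪v4, v4⟫ / 576 - n ^ 2 / 576) * t ^ 8 := by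
    rw [hQt, hPP t]; ring
  have h76 : t ^ 7 ≤ t ^ 6 := pow_le_pow_of_le_one ht0.le ht1 (by norm_num)
  have h86 : t ^ 8 ≤ t ^ 6 := pow_le_pow_of_le_one ht0.le ht1 (by norm_num)
  have h106 : t ^ 10 ≤ t ^ 6 := pow_le_pow_of_le_one ht0.le ht1 (by norm_num)
  have hPPQ : |⟪Pf t, Pf t⟫ - Qt ^ 2| ≤ K1 * t ^ 6 := by
    rw [hdiff6]
    have habs : |(⟪v2, v4⟫ / 24 + ⟪v3, v3⟫ / 36 - m ^ 2 / 576) * t ^ 6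
        + (⟪v3, v4⟫ / 72 - m * n / 288) * t ^ 7
        + (⟪v4, v4⟫ / 576 - n ^ 2 / 576) * t ^ 8|
        ≤ |⟪v2, v4⟫ / 24 + ⟪v3, v3⟫ / 36 - m ^ 2 / 576| * t ^ 6
          + |⟪v3, v4⟫ / 72 - m * n / 288| * t ^ 7
          + |⟪v4, v4⟫ / 576 - n ^ 2 / 576| * t ^ 8 := by
      refine (abs_add_three _ _ _).trans ?_
      rw [abs_mul, abs_mul, abs_mul, abs_pow, abs_pow, abs_pow, abs_of_pos ht0]
    refine habs.trans ?_
    rw [hK1def]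
    have q1 := mul_le_mul_of_nonneg_left h76 (abs_nonneg (⟪v3, v4⟫ / 72 - m * n / 288))
    have q2 := mul_le_mul_of_nonneg_left h86 (abs_nonneg (⟪v4, v4⟫ / 576 - n ^ 2 / 576))
    linarith
  have hsq : |Nt ^ 2 - Qt ^ 2| ≤ Ktot * t ^ 6 := by
    have h1 : Nt ^ 2 - Qt ^ 2 = (⟪Pf t, Pf t⟫ - Qt ^ 2) + 2 * ⟪Pf t, Rt⟫ + ⟪Rt, Rt⟫ := by
      rw [hN2]; ring
    rw [h1]
    have h2 : |(⟪Pf t, Pf t⟫ - Qt ^ 2) + 2 * ⟪Pf t, Rt⟫ + ⟪Rt, Rt⟫|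
        ≤ |⟪Pf t, Pf t⟫ - Qt ^ 2| + 2 * |⟪Pf t, Rt⟫| + ⟪Rt, Rt⟫ := by
      refine (abs_add_three _ _ _).trans ?_
      rw [abs_mul, abs_of_nonneg hRR0]
      norm_num
    refine h2.trans ?_
    rw [hKtotdef]
    have q3 := mul_le_mul_of_nonneg_left h106 (sq_nonneg C)
    have hid1 : 2 * (M1 * t * (C * t ^ 5)) = 2 * (M1 * C) * t ^ 6 := by ring
    have hid2 : (C * t ^ 5) ^ 2 = C ^ 2 * t ^ 10 := by ring
    linarith
  have hprod : |Nt - Qt| * (Nt + Qt) = |Nt ^ 2 - Qt ^ 2| := by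
    rw [← abs_of_nonneg (show (0:ℝ) ≤ Nt + Qt by linarith), ← abs_mul]
    congr 1; ring
  have hNQle : |Nt - Qt| * (t / 2) ≤ Ktot * t ^ 6 := by
    calc |Nt - Qt| * (t / 2) ≤ |Nt - Qt| * (Nt + Qt) :=
          mul_le_mul_of_nonneg_left (by linarith) (abs_nonneg _)
      _ = |Nt ^ 2 - Qt ^ 2| := hprod
      _ ≤ Ktot * t ^ 6 := hsq
  have h2 : (2 * Ktot * t ^ 5) * (t / 2) = Ktot * t ^ 6 := by ring
  exact le_of_mul_le_mul_right (hNQle.trans_eq h2.symm) (by linarith)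
end

section
/- Let p ≥ 1 and let γ : ℝ → ℝ^p be five times continuously differentiable on a neighborhood of 0 with ‖γ′(s)‖ = 1 for all s in that neighborhood. Set h(t) := ‖γ(t) − γ(0)‖. Then, as t → 0⁺, t = h(t) + (‖γ″(0)‖²/24)·h(t)³ + (⟨γ‴(0), γ″(0)⟩/24)·h(t)⁴ + O(t⁵). -/
open Asymptotics Filter Topology
open scoped RealInnerProductSpace


set_option maxHeartbeats 1000000

open Set

/-- MVT step: derivative bounded by `C·t^k` on `[0,δ]` gives `C·t^(k+1)` bound. -/
lemma mvt_poly_step {f f' : ℝ → ℝ} {δ C : ℝ} {k : ℕ} (hC : 0 ≤ C)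
    (hd : ∀ t ∈ Set.Icc (0:ℝ) δ, HasDerivAt f (f' t) t)
    (hb : ∀ t ∈ Set.Icc (0:ℝ) δ, |f' t| ≤ C * t ^ k) :
    ∀ t ∈ Set.Icc (0:ℝ) δ, |f t - f 0| ≤ C * t ^ (k+1) := by
  intro t ht
  have h1 : ∀ x ∈ Set.Icc (0:ℝ) t, HasDerivWithinAt f (f' x) (Set.Icc 0 t) x := fun x hx =>
    (hd x ⟨hx.1, hx.2.trans ht.2⟩).hasDerivWithinAt
  have h2 : ∀ x ∈ Set.Ico (0:ℝ) t, ‖f' x‖ ≤ C * t ^ k := by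
    intro x hx
    have := (hb x ⟨hx.1, hx.2.le.trans ht.2⟩).trans
      (mul_le_mul_of_nonneg_left (pow_le_pow_left₀ hx.1 hx.2.le k) hC)
    simpa using this
  have := norm_image_sub_le_of_norm_deriv_le_segment' h1 h2 t (Set.right_mem_Icc.mpr ht.1)
  rw [Real.norm_eq_abs] at this
  calc |f t - f 0| ≤ C * t ^ k * (t - 0) := this
    _ = C * t ^ (k+1) := by ring



lemma final_algebra {a b K C₀ t h : ℝ} (hK : 0 ≤ K) (hC₀ : 0 ≤ C₀) (ht : 0 < t) (ht1 : t ≤ 1)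
    (hh : 0 ≤ h)
    (hR : |h^2 - (t^2 - a*t^4/12 - b*t^5/12)| ≤ C₀ * t^6)
    (hK4 : |h^2 - t^2| ≤ K * t^4) (hKs : K * t^2 ≤ 1/4) :
    |t - (h + a/24*h^3 + b/24*h^4)| ≤ ((22 * |a| *K + 46 * |b| *K + 24*C₀)/24) * t^5 := by
  have htp : (0:ℝ) < t^2 := by positivity
  have hKt4 : K * t^4 ≤ (1/4) * t^2 := by nlinarith [sq_nonneg t]
  have hu := abs_le.mp hK4
  have h2t : h ≤ 2*t := by nlinarith [hu.2, sq_nonneg (h - 2*t), sq_nonneg (h + 2*t)]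
  have hht : 0 < h + t := by linarith
  have hdiff : |h - t| ≤ K * t^3 := by
    have e : |h^2 - t^2| = |h - t| * (h + t) := by
      rw [show h^2 - t^2 = (h-t)*(h+t) by ring, abs_mul, abs_of_pos hht]
    rw [e] at hK4
    have h1 : |h - t| * t ≤ |h - t| * (h + t) :=
      mul_le_mul_of_nonneg_left (by linarith) (abs_nonneg _)
    have h2 : |h - t| * t ≤ (K * t^3) * t := by
      calc |h - t| * t ≤ K * t^4 := h1.trans hK4
        _ = (K * t^3) * t := by ring
    exact le_of_mul_le_mul_right h2 ht
  have hd3 : |t^3 - h^3| ≤ 7*K*t^5 := by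
    rw [show t^3 - h^3 = (t-h)*(t^2+t*h+h^2) by ring, abs_mul]
    have e1 : |t - h| ≤ K*t^3 := by rwa [abs_sub_comm]
    have e2 : |t^2+t*h+h^2| ≤ 7*t^2 := by
      rw [abs_of_nonneg (by positivity)]; nlinarith
    calc |t-h| * |t^2+t*h+h^2| ≤ (K*t^3) * (7*t^2) :=
          mul_le_mul e1 e2 (abs_nonneg _) (by positivity)
      _ = 7*K*t^5 := by ring
  have hd4 : |t^4 - h^4| ≤ 15*K*t^6 := by
    rw [show t^4 - h^4 = (t-h)*((t+h)*(t^2+h^2)) by ring, abs_mul]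
    have e1 : |t - h| ≤ K*t^3 := by rwa [abs_sub_comm]
    have e2 : |(t+h)*(t^2+h^2)| ≤ 3*t*(5*t^2) := by
      rw [abs_of_nonneg (by positivity)]; nlinarith [sq_nonneg h, sq_nonneg t]
    calc |t-h| * |(t+h)*(t^2+h^2)| ≤ (K*t^3) * (3*t*(5*t^2)) :=
          mul_le_mul e1 e2 (abs_nonneg _) (by positivity)
      _ = 15*K*t^6 := by ring
  have hd5 : |t^5 - h^5| ≤ 31*K*t^6 := by
    rw [show t^5 - h^5 = (t-h)*(t^4+t^3*h+t^2*h^2+t*h^3+h^4) by ring, abs_mul]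
    have e1 : |t - h| ≤ K*t^3 := by rwa [abs_sub_comm]
    have e2 : |t^4+t^3*h+t^2*h^2+t*h^3+h^4| ≤ 31*t^4 := by
      rw [abs_of_nonneg (by positivity)]; nlinarith [pow_le_pow_left₀ hh h2t 2, pow_le_pow_left₀ hh h2t 3, pow_le_pow_left₀ hh h2t 4]
    have e3 : K*t^3 * (31*t^4) ≤ 31*K*t^6 := by nlinarith [pow_le_pow_of_le_one ht.le ht1 (show 6 ≤ 7 by norm_num), pow_nonneg ht.le 7, pow_nonneg ht.le 6]
    calc |t-h| * |t^4+t^3*h+t^2*h^2+t*h^3+h^4| ≤ (K*t^3) * (31*t^4) :=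
          mul_le_mul e1 e2 (abs_nonneg _) (by positivity)
      _ ≤ 31*K*t^6 := e3
  -- main decomposition
  set E := t - (h + a/24*h^3 + b/24*h^4) with hE
  set R := h^2 - (t^2 - a*t^4/12 - b*t^5/12) with hRdef
  have key : E*(t+h) = (a/24)*(t*(t^3-h^3) + (t^4-h^4)) + (b/24)*(t*(t^4-h^4) + (t^5-h^5)) - R := by
    rw [hE, hRdef]; ring
  have b1 : |t*(t^3-h^3) + (t^4-h^4)| ≤ 22*K*t^6 := by
    have : |t*(t^3-h^3)| ≤ 7*K*t^6 := by
      rw [abs_mul, abs_of_pos ht]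
      calc t * |t^3-h^3| ≤ t * (7*K*t^5) := mul_le_mul_of_nonneg_left hd3 ht.le
        _ = 7*K*t^6 := by ring
    calc |t*(t^3-h^3) + (t^4-h^4)| ≤ |t*(t^3-h^3)| + |t^4-h^4| := abs_add_le _ _
      _ ≤ 7*K*t^6 + 15*K*t^6 := add_le_add this hd4
      _ = 22*K*t^6 := by ring
  have b2 : |t*(t^4-h^4) + (t^5-h^5)| ≤ 46*K*t^6 := by
    have e7 : t^7 ≤ t^6 := pow_le_pow_of_le_one ht.le ht1 (by norm_num)
    have : |t*(t^4-h^4)| ≤ 15*K*t^6 := by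
      rw [abs_mul, abs_of_pos ht]
      calc t * |t^4-h^4| ≤ t * (15*K*t^6) := mul_le_mul_of_nonneg_left hd4 ht.le
        _ = 15*K*t^7 := by ring
        _ ≤ 15*K*t^6 := mul_le_mul_of_nonneg_left e7 (by positivity)
    calc |t*(t^4-h^4) + (t^5-h^5)| ≤ |t*(t^4-h^4)| + |t^5-h^5| := abs_add_le _ _
      _ ≤ 15*K*t^6 + 31*K*t^6 := add_le_add this hd5
      _ = 46*K*t^6 := by ring
  have hEb : |E| * t ≤ ((22 * |a| *K + 46 * |b| *K + 24*C₀)/24 * t^5) * t := by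
    have h0 : |E| * t ≤ |E| * (t+h) := mul_le_mul_of_nonneg_left (by linarith) (abs_nonneg _)
    have h1 : |E| * (t+h) = |E*(t+h)| := by rw [abs_mul, abs_of_pos (show (0:ℝ) < t + h by linarith)]
    have h2 : |E*(t+h)| ≤ (22 * |a| *K + 46 * |b| *K + 24*C₀)/24 * t^6 := by
      rw [key]
      calc |(a/24)*(t*(t^3-h^3) + (t^4-h^4)) + (b/24)*(t*(t^4-h^4) + (t^5-h^5)) - R|
          ≤ |(a/24)*(t*(t^3-h^3) + (t^4-h^4))| + |(b/24)*(t*(t^4-h^4) + (t^5-h^5))| + |R| := by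
            exact (abs_sub _ _).trans (add_le_add_left (abs_add_le _ _) _)
        _ ≤ (|a|/24)*(22*K*t^6) + (|b|/24)*(46*K*t^6) + C₀*t^6 := by
            refine add_le_add (add_le_add ?_ ?_) hR
            · rw [abs_mul, abs_div, abs_of_pos (by norm_num : (0:ℝ) < 24)]
              exact mul_le_mul_of_nonneg_left b1 (by positivity)
            · rw [abs_mul, abs_div, abs_of_pos (by norm_num : (0:ℝ) < 24)]
              exact mul_le_mul_of_nonneg_left b2 (by positivity)
        _ = (22 * |a| *K + 46 * |b| *K + 24*C₀)/24 * t^6 := by ring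
    calc |E| * t ≤ |E*(t+h)| := h0.trans_eq h1
      _ ≤ (22 * |a| *K + 46 * |b| *K + 24*C₀)/24 * t^6 := h2
      _ = ((22 * |a| *K + 46 * |b| *K + 24*C₀)/24 * t^5) * t := by ring
  exact le_of_mul_le_mul_right hEb ht

/-- For a unit-speed (arc-length parametrized) `C^5` curve
`γ : ℝ → ℝ^p` near `0`, with `h(t) := ‖γ(t) − γ(0)‖`, as `t → 0⁺`,
`t = h(t) + (‖γ″(0)‖²/24)·h(t)³ + (⟨γ‴(0), γ″(0)⟩/24)·h(t)⁴ + O(t⁵)`. -/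
theorem geodesic_distance_from_euclidean_distance_expansion
    (p : ℕ) (hp : 1 ≤ p) (γ : ℝ → EuclideanSpace ℝ (Fin p))
    (U : Set ℝ) (hU : U ∈ 𝓝 (0 : ℝ)) (hγ : ContDiffOn ℝ 5 γ U)
    (harc : ∀ s ∈ U, ‖deriv γ s‖ = 1) :
    (fun t : ℝ => t -
        (‖γ t - γ 0‖ + (‖iteratedDeriv 2 γ 0‖ ^ 2 / 24) * ‖γ t - γ 0‖ ^ 3
          + (⟪iteratedDeriv 3 γ 0, iteratedDeriv 2 γ 0⟫ / 24) * ‖γ t - γ 0‖ ^ 4))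
      =O[𝓝[>] (0 : ℝ)] fun t => t ^ 5 := by
  obtain ⟨ε, hε, hball⟩ := Metric.mem_nhds_iff.mp hU
  set I : Set ℝ := Metric.ball (0:ℝ) ε with hIdef
  have hIopen : IsOpen I := Metric.isOpen_ball
  have hγI : ContDiffOn ℝ 5 γ I := hγ.mono hball
  set d1 := deriv γ with hd1def
  set d2 := deriv d1 with hd2def
  set d3 := deriv d2 with hd3def
  set d4 := deriv d3 with hd4def
  set d5 := deriv d4 with hd5def
  have c1 : ContDiffOn ℝ 4 d1 I := hγI.deriv_of_isOpen hIopen (by norm_num)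
  have c2 : ContDiffOn ℝ 3 d2 I := c1.deriv_of_isOpen hIopen (by norm_num)
  have c3 : ContDiffOn ℝ 2 d3 I := c2.deriv_of_isOpen hIopen (by norm_num)
  have c4 : ContDiffOn ℝ 1 d4 I := c3.deriv_of_isOpen hIopen (by norm_num)
  have c5 : ContinuousOn d5 I := c4.continuousOn_deriv_of_isOpen hIopen (le_refl 1)
  have hγ' : ∀ t ∈ I, HasDerivAt γ (d1 t) t := fun t ht =>
    ((hγI.differentiableOn (by norm_num)).differentiableAt (hIopen.mem_nhds ht)).hasDerivAt
  have h1' : ∀ t ∈ I, HasDerivAt d1 (d2 t) t := fun t ht =>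
    ((c1.differentiableOn (by norm_num)).differentiableAt (hIopen.mem_nhds ht)).hasDerivAt
  have h2' : ∀ t ∈ I, HasDerivAt d2 (d3 t) t := fun t ht =>
    ((c2.differentiableOn (by norm_num)).differentiableAt (hIopen.mem_nhds ht)).hasDerivAt
  have h3' : ∀ t ∈ I, HasDerivAt d3 (d4 t) t := fun t ht =>
    ((c3.differentiableOn (by norm_num)).differentiableAt (hIopen.mem_nhds ht)).hasDerivAt
  have h4' : ∀ t ∈ I, HasDerivAt d4 (d5 t) t := fun t ht =>
    ((c4.differentiableOn (by norm_num)).differentiableAt (hIopen.mem_nhds ht)).hasDerivAt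
  have unit : ∀ t ∈ I, ⟪d1 t, d1 t⟫ = 1 := by
    intro t ht
    rw [real_inner_self_eq_norm_sq, harc t (hball ht)]; norm_num
  have hconst : ∀ (φ : ℝ → ℝ) (c : ℝ), (∀ s ∈ I, φ s = c) → ∀ t ∈ I, HasDerivAt φ 0 t := by
    intro φ c hφ t ht
    exact (hasDerivAt_const t c).congr_of_eventuallyEq
      (Filter.eventually_of_mem (hIopen.mem_nhds ht) hφ)
  have rel1 : ∀ t ∈ I, ⟪d2 t, d1 t⟫ = 0 := by
    intro t ht
    have hA : HasDerivAt (fun s => (⟪d1 s, d1 s⟫ : ℝ)) (⟪d1 t, d2 t⟫ + ⟪d2 t, d1 t⟫) t :=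
      HasDerivAt.inner ℝ (h1' t ht) (h1' t ht)
    have := (hconst _ 1 unit t ht).unique hA
    linarith [real_inner_comm (d1 t) (d2 t)]
  have rel2 : ∀ t ∈ I, ⟪d3 t, d1 t⟫ = -⟪d2 t, d2 t⟫ := by
    intro t ht
    have hA : HasDerivAt (fun s => (⟪d2 s, d1 s⟫ : ℝ)) (⟪d2 t, d2 t⟫ + ⟪d3 t, d1 t⟫) t :=
      HasDerivAt.inner ℝ (h2' t ht) (h1' t ht)
    have := (hconst _ 0 rel1 t ht).unique hA
    linarith
  have rel3 : ∀ t ∈ I, ⟪d4 t, d1 t⟫ = -(3*⟪d3 t, d2 t⟫) := by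
    intro t ht
    have hA : HasDerivAt (fun s => (⟪d3 s, d1 s⟫ + ⟪d2 s, d2 s⟫ : ℝ))
        ((⟪d3 t, d2 t⟫ + ⟪d4 t, d1 t⟫) + (⟪d2 t, d3 t⟫ + ⟪d3 t, d2 t⟫)) t :=
      (HasDerivAt.inner ℝ (h3' t ht) (h1' t ht)).add (HasDerivAt.inner ℝ (h2' t ht) (h2' t ht))
    have h0 : ∀ s ∈ I, (⟪d3 s, d1 s⟫ + ⟪d2 s, d2 s⟫ : ℝ) = 0 := by
      intro s hs; rw [rel2 s hs]; ring
    have := (hconst _ 0 h0 t ht).unique hA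
    linarith [real_inner_comm (d2 t) (d3 t)]
  -- the squared-distance function and its successive derivatives
  set Δ : ℝ → EuclideanSpace ℝ (Fin p) := fun s => γ s - γ 0 with hΔdef
  have hΔ' : ∀ t ∈ I, HasDerivAt Δ (d1 t) t := fun t ht => (hγ' t ht).sub_const _
  set F : ℝ → ℝ := fun s => ⟪Δ s, Δ s⟫ with hFdef
  set F1 : ℝ → ℝ := fun s => 2*⟪d1 s, Δ s⟫ with hF1def
  set F2 : ℝ → ℝ := fun s => 2*⟪d2 s, Δ s⟫ + 2 with hF2def
  set F3 : ℝ → ℝ := fun s => 2*⟪d3 s, Δ s⟫ with hF3def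
  set F4 : ℝ → ℝ := fun s => 2*⟪d4 s, Δ s⟫ - 2*⟪d2 s, d2 s⟫ with hF4def
  set F5 : ℝ → ℝ := fun s => 2*⟪d5 s, Δ s⟫ - 10*⟪d3 s, d2 s⟫ with hF5def
  have hF' : ∀ t ∈ I, HasDerivAt F (F1 t) t := by
    intro t ht
    have h := HasDerivAt.inner ℝ (hΔ' t ht) (hΔ' t ht)
    convert h using 1; rfl; rfl
    rw [hF1def, real_inner_comm (d1 t) (Δ t)]; ring
  have hF1' : ∀ t ∈ I, HasDerivAt F1 (F2 t) t := by
    intro t ht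
    have h := (HasDerivAt.inner ℝ (h1' t ht) (hΔ' t ht)).const_mul (2:ℝ)
    convert h using 1; rfl; rfl
    rw [hF2def, unit t ht]; ring
  have hF2' : ∀ t ∈ I, HasDerivAt F2 (F3 t) t := by
    intro t ht
    have h := ((HasDerivAt.inner ℝ (h2' t ht) (hΔ' t ht)).const_mul (2:ℝ)).add_const 2
    convert h using 1; rfl; rfl
    rw [hF3def, rel1 t ht]; ring
  have hF3' : ∀ t ∈ I, HasDerivAt F3 (F4 t) t := by
    intro t ht
    have h := (HasDerivAt.inner ℝ (h3' t ht) (hΔ' t ht)).const_mul (2:ℝ)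
    convert h using 1; rfl; rfl
    rw [hF4def, rel2 t ht]; ring
  have hF4' : ∀ t ∈ I, HasDerivAt F4 (F5 t) t := by
    intro t ht
    have h := ((HasDerivAt.inner ℝ (h4' t ht) (hΔ' t ht)).const_mul (2:ℝ)).sub
      ((HasDerivAt.inner ℝ (h2' t ht) (h2' t ht)).const_mul (2:ℝ))
    convert h using 1; rfl; rfl; rfl
    rw [hF5def, rel3 t ht, real_inner_comm (d3 t) (d2 t)]; ring
  -- a compact interval inside I
  set δ : ℝ := min (ε/2) 1 with hδdef
  have hδpos : 0 < δ := lt_min (by linarith) one_pos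
  have hδ1 : δ ≤ 1 := min_le_right _ _
  have hKI : Icc (0:ℝ) δ ⊆ I := by
    intro x hx
    have : |x| < ε := by
      rw [abs_of_nonneg hx.1]
      exact lt_of_le_of_lt (hx.2.trans (min_le_left _ _)) (by linarith)
    simpa [hIdef, Real.dist_eq] using this
  have h0δ : (0:ℝ) ∈ Icc (0:ℝ) δ := ⟨le_refl _, hδpos.le⟩
  -- ‖Δ t‖ ≤ t on [0,δ]
  have hΔle : ∀ t ∈ Icc (0:ℝ) δ, ‖Δ t‖ ≤ t := by
    intro t ht
    have hsub : Icc (0:ℝ) t ⊆ Icc 0 δ := Icc_subset_Icc le_rfl ht.2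
    have h1 : ∀ x ∈ Icc (0:ℝ) t, HasDerivWithinAt γ (d1 x) (Icc 0 t) x := fun x hx =>
      (hγ' x (hKI (hsub hx))).hasDerivWithinAt
    have h2 : ∀ x ∈ Ico (0:ℝ) t, ‖d1 x‖ ≤ 1 := fun x hx =>
      le_of_eq (harc x (hball (hKI (hsub (Ico_subset_Icc_self hx)))))
    have := norm_image_sub_le_of_norm_deriv_le_segment' h1 h2 t (right_mem_Icc.mpr ht.1)
    simpa [hΔdef] using this
  -- compactness bounds
  have hcpt : IsCompact (Icc (0:ℝ) δ) := isCompact_Icc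
  obtain ⟨M5, hM5⟩ := hcpt.exists_bound_of_continuousOn (c5.mono hKI)
  have hM5nn : 0 ≤ M5 := (norm_nonneg _).trans (hM5 0 h0δ)
  have cc2 : ContinuousOn d2 I := c2.continuousOn
  have cc3 : ContinuousOn d3 I := c3.continuousOn
  have cc4 : ContinuousOn d4 I := c4.continuousOn
  have ψcont : ContinuousOn (fun s => (⟪d3 s, d3 s⟫ + ⟪d4 s, d2 s⟫ : ℝ)) I :=
    (cc3.inner cc3).add (cc4.inner cc2)
  obtain ⟨Mq, hMq⟩ := hcpt.exists_bound_of_continuousOn (ψcont.mono hKI)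
  have hMqnn : 0 ≤ Mq := (norm_nonneg _).trans (hMq 0 h0δ)
  -- deviation of ⟪d3, d2⟫
  have hq' : ∀ t ∈ Icc (0:ℝ) δ, HasDerivAt (fun s => (⟪d3 s, d2 s⟫ : ℝ))
      (⟪d3 t, d3 t⟫ + ⟪d4 t, d2 t⟫) t := fun t ht =>
    HasDerivAt.inner ℝ (h3' t (hKI ht)) (h2' t (hKI ht))
  have hq32 : ∀ t ∈ Icc (0:ℝ) δ, |(⟪d3 t, d2 t⟫ : ℝ) - ⟪d3 0, d2 0⟫| ≤ Mq * t^(0+1) :=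
    mvt_poly_step hMqnn hq' (fun t ht => by
      simpa [Real.norm_eq_abs] using hMq t ht)
  -- values at 0
  have hΔ0 : Δ 0 = 0 := by simp [hΔdef]
  have hF0 : F 0 = 0 := by simp [hFdef, hΔ0]
  have hF10 : F1 0 = 0 := by simp [hF1def, hΔ0]
  have hF20 : F2 0 = 2 := by simp [hF2def, hΔ0]
  have hF30 : F3 0 = 0 := by simp [hF3def, hΔ0]
  have hF40 : F4 0 = -(2*⟪d2 0, d2 0⟫) := by simp [hF4def, hΔ0]
  have hF50 : F5 0 = -(10*⟪d3 0, d2 0⟫) := by simp [hF5def, hΔ0]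
  -- F5 deviation
  set C5 : ℝ := 2*M5 + 10*Mq with hC5def
  have hC5nn : 0 ≤ C5 := by positivity
  have hF5dev : ∀ t ∈ Icc (0:ℝ) δ, |F5 t - F5 0| ≤ C5 * t^1 := by
    intro t ht
    have e1 : F5 t - F5 0 = 2*⟪d5 t, Δ t⟫ - 10*((⟪d3 t, d2 t⟫ : ℝ) - ⟪d3 0, d2 0⟫) := by
      rw [hF50, hF5def]; ring
    have e2 : |(⟪d5 t, Δ t⟫ : ℝ)| ≤ M5 * t := by
      refine (abs_real_inner_le_norm _ _).trans ?_
      exact mul_le_mul (hM5 t ht) (hΔle t ht) (norm_nonneg _) hM5nn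
    calc |F5 t - F5 0| ≤ 2*|(⟪d5 t, Δ t⟫ : ℝ)| + 10*|(⟪d3 t, d2 t⟫ : ℝ) - ⟪d3 0, d2 0⟫| := by
          rw [e1]
          calc |2*(⟪d5 t, Δ t⟫ : ℝ) - 10*((⟪d3 t, d2 t⟫ : ℝ) - ⟪d3 0, d2 0⟫)|
              ≤ |2*(⟪d5 t, Δ t⟫ : ℝ)| + |10*((⟪d3 t, d2 t⟫ : ℝ) - ⟪d3 0, d2 0⟫)| := abs_sub _ _
            _ = 2*|(⟪d5 t, Δ t⟫ : ℝ)| + 10*|(⟪d3 t, d2 t⟫ : ℝ) - ⟪d3 0, d2 0⟫| := by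
                rw [abs_mul, abs_mul]; norm_num
      _ ≤ 2*(M5*t) + 10*(Mq*t^(0+1)) := by
          exact add_le_add (by linarith [e2]) (by linarith [hq32 t ht])
      _ = C5 * t^1 := by rw [hC5def]; ring
  -- cascade of Taylor bounds
  have hKIc : ∀ t ∈ Icc (0:ℝ) δ, t ∈ I := fun t ht => hKI ht
  have hφ4' : ∀ t ∈ Icc (0:ℝ) δ, HasDerivAt (fun s => F4 s - F4 0 - F5 0 * s) (F5 t - F5 0) t := by
    intro t ht
    have h := ((hF4' t (hKIc t ht)).sub_const (F4 0)).sub ((hasDerivAt_id t).const_mul (F5 0))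
    convert h using 1; rfl; rfl; rfl; ring
  have hs4 : ∀ t ∈ Icc (0:ℝ) δ, |F4 t - F4 0 - F5 0 * t| ≤ C5 * t^2 := by
    have := mvt_poly_step hC5nn hφ4' hF5dev
    intro t ht
    have h := this t ht
    simpa using h
  have hφ3' : ∀ t ∈ Icc (0:ℝ) δ, HasDerivAt
      (fun s => F3 s - F3 0 - F4 0 * s - F5 0/2 * s^2) (F4 t - F4 0 - F5 0 * t) t := by
    intro t ht
    have h := (((hF3' t (hKIc t ht)).sub_const (F3 0)).sub
      ((hasDerivAt_id t).const_mul (F4 0))).sub ((hasDerivAt_pow 2 t).const_mul (F5 0/2))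
    convert h using 1; rfl; rfl; rfl; push_cast; ring
  have hs3 : ∀ t ∈ Icc (0:ℝ) δ, |F3 t - F3 0 - F4 0 * t - F5 0/2 * t^2| ≤ C5 * t^3 := by
    have := mvt_poly_step hC5nn hφ3' hs4
    intro t ht
    simpa using this t ht
  have hφ2' : ∀ t ∈ Icc (0:ℝ) δ, HasDerivAt
      (fun s => F2 s - F2 0 - F3 0 * s - F4 0/2 * s^2 - F5 0/6 * s^3)
      (F3 t - F3 0 - F4 0 * t - F5 0/2 * t^2) t := by
    intro t ht
    have h := ((((hF2' t (hKIc t ht)).sub_const (F2 0)).sub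
      ((hasDerivAt_id t).const_mul (F3 0))).sub ((hasDerivAt_pow 2 t).const_mul (F4 0/2))).sub
      ((hasDerivAt_pow 3 t).const_mul (F5 0/6))
    convert h using 1; rfl; rfl; rfl; push_cast; ring
  have hs2 : ∀ t ∈ Icc (0:ℝ) δ, |F2 t - F2 0 - F3 0 * t - F4 0/2 * t^2 - F5 0/6 * t^3| ≤ C5 * t^4 := by
    have := mvt_poly_step hC5nn hφ2' hs3
    intro t ht
    simpa using this t ht
  have hφ1' : ∀ t ∈ Icc (0:ℝ) δ, HasDerivAt
      (fun s => F1 s - F1 0 - F2 0 * s - F3 0/2 * s^2 - F4 0/6 * s^3 - F5 0/24 * s^4)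
      (F2 t - F2 0 - F3 0 * t - F4 0/2 * t^2 - F5 0/6 * t^3) t := by
    intro t ht
    have h := (((((hF1' t (hKIc t ht)).sub_const (F1 0)).sub
      ((hasDerivAt_id t).const_mul (F2 0))).sub ((hasDerivAt_pow 2 t).const_mul (F3 0/2))).sub
      ((hasDerivAt_pow 3 t).const_mul (F4 0/6))).sub ((hasDerivAt_pow 4 t).const_mul (F5 0/24))
    convert h using 1; rfl; rfl; rfl; push_cast; ring
  have hs1 : ∀ t ∈ Icc (0:ℝ) δ,
      |F1 t - F1 0 - F2 0 * t - F3 0/2 * t^2 - F4 0/6 * t^3 - F5 0/24 * t^4| ≤ C5 * t^5 := by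
    have := mvt_poly_step hC5nn hφ1' hs2
    intro t ht
    simpa using this t ht
  have hφ0' : ∀ t ∈ Icc (0:ℝ) δ, HasDerivAt
      (fun s => F s - F 0 - F1 0 * s - F2 0/2 * s^2 - F3 0/6 * s^3 - F4 0/24 * s^4 - F5 0/120 * s^5)
      (F1 t - F1 0 - F2 0 * t - F3 0/2 * t^2 - F4 0/6 * t^3 - F5 0/24 * t^4) t := by
    intro t ht
    have h := ((((((hF' t (hKIc t ht)).sub_const (F 0)).sub
      ((hasDerivAt_id t).const_mul (F1 0))).sub ((hasDerivAt_pow 2 t).const_mul (F2 0/2))).sub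
      ((hasDerivAt_pow 3 t).const_mul (F3 0/6))).sub
      ((hasDerivAt_pow 4 t).const_mul (F4 0/24))).sub ((hasDerivAt_pow 5 t).const_mul (F5 0/120))
    convert h using 1; rfl; rfl; rfl; push_cast; ring
  have hs0 : ∀ t ∈ Icc (0:ℝ) δ,
      |F t - F 0 - F1 0 * t - F2 0/2 * t^2 - F3 0/6 * t^3 - F4 0/24 * t^4 - F5 0/120 * t^5|
        ≤ C5 * t^6 := by
    have := mvt_poly_step hC5nn hφ0' hs1
    intro t ht
    simpa using this t ht
  -- explicit Taylor expansion of F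
  set A : ℝ := ⟪d2 0, d2 0⟫ with hAdef
  set B : ℝ := ⟪d3 0, d2 0⟫ with hBdef
  have hFexp : ∀ t ∈ Icc (0:ℝ) δ, |F t - (t^2 - A*t^4/12 - B*t^5/12)| ≤ C5 * t^6 := by
    intro t ht
    have h := hs0 t ht
    have e : F t - F 0 - F1 0 * t - F2 0/2 * t^2 - F3 0/6 * t^3 - F4 0/24 * t^4 - F5 0/120 * t^5
        = F t - (t^2 - A*t^4/12 - B*t^5/12) := by
      rw [hF0, hF10, hF20, hF30, hF40, hF50, hAdef, hBdef]; ring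
    rwa [e] at h
  -- identify A and B with the statement's quantities
  have e2 : iteratedDeriv 2 γ = d2 := by
    rw [iteratedDeriv_succ, iteratedDeriv_one, hd2def, hd1def]
  have e3 : iteratedDeriv 3 γ = d3 := by
    rw [iteratedDeriv_succ, e2, hd3def]
  have hA' : A = ‖iteratedDeriv 2 γ 0‖^2 := by
    rw [hAdef, real_inner_self_eq_norm_sq, e2]
  have hB' : B = ⟪iteratedDeriv 3 γ 0, iteratedDeriv 2 γ 0⟫ := by
    rw [hBdef, e2, e3]
  -- the constant K and the small interval
  set K : ℝ := |A|/12 + |B|/12 + C5 with hKdef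
  have hK0 : 0 ≤ K := by positivity
  set δ' : ℝ := min δ (1/(4*(K+1))) with hδ'def
  have hδ'pos : 0 < δ' := lt_min hδpos (by positivity)
  rw [Asymptotics.isBigO_iff]
  refine ⟨(22 * |A| * K + 46 * |B| * K + 24*C5)/24, ?_⟩
  filter_upwards [Ioc_mem_nhdsGT hδ'pos] with t htIoc
  have ht0 : 0 < t := htIoc.1
  have htδ : t ≤ δ := htIoc.2.trans (min_le_left _ _)
  have ht1 : t ≤ 1 := htδ.trans hδ1
  have htIcc : t ∈ Icc (0:ℝ) δ := ⟨ht0.le, htδ⟩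
  set h : ℝ := ‖γ t - γ 0‖ with hhdef
  have hh : 0 ≤ h := norm_nonneg _
  have hFh : F t = h^2 := by
    rw [hFdef]
    simp only [hΔdef]
    rw [real_inner_self_eq_norm_sq]
  have hR : |h^2 - (t^2 - A*t^4/12 - B*t^5/12)| ≤ C5 * t^6 := by
    rw [← hFh]; exact hFexp t htIcc
  clear_value A B C5 K h
  have p54 : t^5 ≤ t^4 := pow_le_pow_of_le_one ht0.le ht1 (by norm_num)
  have p64 : t^6 ≤ t^4 := pow_le_pow_of_le_one ht0.le ht1 (by norm_num)
  have hK4t : |h^2 - t^2| ≤ K * t^4 := by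
    have e : h^2 - t^2 = (h^2 - (t^2 - A*t^4/12 - B*t^5/12)) + (-(A*t^4)/12 - (B*t^5)/12) := by
      ring
    have habs2 : |(-(A*t^4)/12 - (B*t^5)/12)| ≤ |A|/12*t^4 + |B|/12*t^5 := by
      refine (abs_sub _ _).trans ?_
      rw [abs_div, abs_div, abs_neg, abs_mul, abs_mul, abs_of_pos (pow_pos ht0 4),
        abs_of_pos (pow_pos ht0 5), show |(12:ℝ)| = 12 from abs_of_pos (by norm_num)]
      apply le_of_eq; ring
    have h1 : |h^2 - t^2| ≤ C5*t^6 + (|A|/12*t^4 + |B|/12*t^5) := by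
      rw [e]
      exact (abs_add_le _ _).trans (add_le_add hR habs2)
    have h2 : C5*t^6 ≤ C5*t^4 := mul_le_mul_of_nonneg_left p64 hC5nn
    have h3 : |B|/12*t^5 ≤ |B|/12*t^4 := mul_le_mul_of_nonneg_left p54 (by positivity)
    rw [hKdef]
    nlinarith [h1, h2, h3]
  have hKs : K * t^2 ≤ 1/4 := by
    have ht4 : 4*(K+1)*t ≤ 1 := by
      have := htIoc.2.trans (min_le_right _ _)
      rw [le_div_iff₀ (by positivity)] at this
      linarith
    have h1 : t^2 ≤ t := by nlinarith
    have h2 : K*t^2 ≤ K*t := mul_le_mul_of_nonneg_left h1 hK0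
    have e : 4*(K+1)*t = 4*(K*t) + 4*t := by ring
    rw [e] at ht4
    linarith
  have main := final_algebra hK0 hC5nn ht0 ht1 hh hR hK4t hKs
  rw [Real.norm_eq_abs, Real.norm_eq_abs, abs_of_pos (pow_pos ht0 5), ← hA', ← hB']
  exact main
end

section
/- Let p ≥ 1 and let γ : ℝ → ℝ^p be four times continuously differentiable on a neighborhood of 0 with ‖γ′(s)‖ = 1 for all s in that neighborhood. Let Π : ℝ^p → ℝ^p be the orthogonal projection onto the orthogonal complement of the line spanned by γ′(0), and set h(t) := ‖γ(t) − γ(0)‖ (which is positive for all sufficiently small t > 0). Then, as t → 0⁺, | t − ( h(t) + ‖Π(γ(t) − γ(0))‖² / (6·h(t)) ) | = O(t⁴). -/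
open Asymptotics Filter Topology

open Set Filter Topology RealInnerProductSpace


lemma gce_itd_open {E : Type*} [NormedAddCommGroup E] [NormedSpace ℝ E]
    {f : ℝ → E} {V : Set ℝ} (hV : IsOpen V) {n : ℕ} {x : ℝ} (hx : x ∈ V) :
    iteratedDerivWithin n f V x = iteratedDeriv n f x := by
  rw [iteratedDerivWithin_eq_iteratedFDerivWithin, iteratedDeriv_eq_iteratedFDeriv,
    iteratedFDerivWithin_of_isOpen n hV hx]

lemma gce_diffat {E : Type*} [NormedAddCommGroup E] [NormedSpace ℝ E]
    {f : ℝ → E} {V : Set ℝ} (hV : IsOpen V) {n : WithTop ℕ∞} {m : ℕ}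
    (hf : ContDiffOn ℝ n f V) (hm : (m : WithTop ℕ∞) < n) {x : ℝ} (hx : x ∈ V) :
    DifferentiableAt ℝ (iteratedDeriv m f) x := by
  have h1 := hf.differentiableOn_iteratedDerivWithin hm hV.uniqueDiffOn x hx
  have h2 : DifferentiableWithinAt ℝ (iteratedDeriv m f) V x :=
    h1.congr (fun y hy => (gce_itd_open hV hy).symm) (gce_itd_open hV hx).symm
  exact h2.differentiableAt (hV.mem_nhds hx)

lemma gce_itdw_Icc {E : Type*} [NormedAddCommGroup E] [NormedSpace ℝ E]
    {f : ℝ → E} {V : Set ℝ} (hV : IsOpen V) (hf : ContDiffOn ℝ 4 f V)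
    {δ : ℝ} (hδ : 0 < δ) (hsub : Icc 0 δ ⊆ V) :
    ∀ k : ℕ, k ≤ 3 → iteratedDerivWithin k f (Icc 0 δ) 0 = iteratedDeriv k f 0 := by
  have h0V : (0:ℝ) ∈ V := hsub (left_mem_Icc.mpr hδ.le)
  intro k
  induction k with
  | zero => intro _; simp [iteratedDerivWithin_zero, iteratedDeriv_zero]
  | succ k ih =>
    intro hk
    have hk3 : k ≤ 3 := by omega
    have hu : UniqueDiffWithinAt ℝ (Icc (0:ℝ) δ) 0 :=
      (uniqueDiffOn_Icc hδ) 0 (left_mem_Icc.mpr hδ.le)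
    rw [iteratedDerivWithin_succ]
    have hIco : Ico (0:ℝ) δ ∈ 𝓝[Icc (0:ℝ) δ] 0 := by
      have : Icc (0:ℝ) δ ∩ Iio δ ∈ 𝓝[Icc (0:ℝ) δ] 0 :=
        inter_mem_nhdsWithin _ (Iio_mem_nhds hδ)
      have heqset : Icc (0:ℝ) δ ∩ Iio δ = Ico (0:ℝ) δ := by
        ext y
        simp only [mem_inter_iff, mem_Icc, mem_Ico, mem_Iio]
        constructor
        · rintro ⟨⟨h1, _⟩, h3⟩; exact ⟨h1, h3⟩
        · rintro ⟨h1, h3⟩; exact ⟨⟨h1, le_of_lt h3⟩, h3⟩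
      rwa [heqset] at this
    have heq : iteratedDerivWithin k f (Icc 0 δ) =ᶠ[𝓝[Icc (0:ℝ) δ] 0] iteratedDeriv k f := by
      filter_upwards [hIco] with y hy
      rcases eq_or_lt_of_le hy.1 with h0 | h0
      · rw [← h0]; exact ih hk3
      · have hnh : Icc (0:ℝ) δ ∈ 𝓝 y := Icc_mem_nhds h0 hy.2
        rw [iteratedDerivWithin_eq_iteratedFDerivWithin, iteratedDeriv_eq_iteratedFDeriv]
        congr 1
        have h5 := iteratedFDerivWithin_inter (𝕜 := ℝ) (f := f) (s := univ) (n := k) hnh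
        rwa [univ_inter, iteratedFDerivWithin_univ] at h5
    have hklt : ((k : ℕ) : WithTop ℕ∞) < 4 := by
      have h4 : ((4:ℕ) : WithTop ℕ∞) = 4 := by rfl
      rw [← h4, Nat.cast_lt]
      omega
    rw [heq.derivWithin_eq (ih hk3)]
    rw [(gce_diffat hV hf hklt h0V).derivWithin hu]
    rw [← iteratedDeriv_succ]


lemma gceA1 {t : ℝ} (ht : 0 < t) (ht1 : t ≤ 1) :
    t^2 ≤ t ∧ t^3 ≤ t^2 ∧ t^4 ≤ t^3 ∧ t^5 ≤ t^4 ∧ t^6 ≤ t^5 ∧ t^8 ≤ t^5 := by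
  have key : ∀ k : ℕ, t^(k+1) ≤ t^k := by
    intro k
    calc t^(k+1) = t^k * t := pow_succ t k
      _ ≤ t^k * 1 := mul_le_mul_of_nonneg_left ht1 (pow_nonneg ht.le k)
      _ = t^k := mul_one _
  have h2 := key 1; have h3 := key 2; have h4 := key 3; have h5 := key 4
  have h6 := key 5; have h7 := key 6; have h8 := key 7
  simp only [pow_one] at h2
  exact ⟨h2, h3, h4, h5, h6, le_trans h8 (le_trans h7 h6)⟩

lemma gceA2 {a t : ℝ} (ha : 0 ≤ a) (ht : 0 ≤ t) (h : t * (a+1) ≤ 1) : a^2 * t^2 ≤ 1 := by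
  nlinarith [mul_nonneg ha ht]

lemma gceA3 {D t : ℝ} (hD : 0 ≤ D) (ht : 0 < t) (h : t * (4*D+1) ≤ 1) : D * t ≤ 1/4 := by
  nlinarith

lemma gceA4 {a b n t : ℝ} (ha : 0 ≤ a) (hb : 0 ≤ b) (ht : 0 < t) (ht1 : t ≤ 1)
    (h : n ≤ t + t^2/2*a + t^3/6*b) : n ≤ (1+a+b)*t := by
  obtain ⟨ht2, ht3, -, -, -, -⟩ := gceA1 ht ht1
  have ht3' : t^3 ≤ t := le_trans ht3 ht2
  nlinarith [mul_le_mul_of_nonneg_left ht2 ha, mul_le_mul_of_nonneg_left ht3' hb]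

lemma gceA5 {u v w a b C t : ℝ} (ha : 0 ≤ a) (hb : 0 ≤ b) (hC : 1 ≤ C)
    (ht : 0 < t) (ht1 : t ≤ 1) (hu : |u| ≤ a*b) (hv : |v| ≤ (1+a+b)*t*(C*t^4))
    (hw : 0 ≤ w) (hw2 : w ≤ C^2*t^5) :
    |t^5*u/6 + t^6*b^2/36 + 2*v + w| ≤ (a*b + b^2 + 2*C*(1+a+b) + C^2)*t^5 := by
  obtain ⟨-, -, -, -, h6, -⟩ := gceA1 ht ht1
  have h1 := abs_le.mp hu
  have h2 := abs_le.mp hv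
  have hb6 : t^6*b^2/36 ≤ t^5*b^2 := by
    have := mul_le_mul_of_nonneg_right h6 (sq_nonneg b)
    have := mul_nonneg (pow_pos ht 6).le (sq_nonneg b)
    linarith
  have hb6' : 0 ≤ t^6*b^2/36 := by positivity
  have hu5 : t^5*u ≤ t^5*(a*b) := mul_le_mul_of_nonneg_left h1.2 (pow_pos ht 5).le
  have hu5' : t^5*(-(a*b)) ≤ t^5*u := mul_le_mul_of_nonneg_left h1.1 (pow_pos ht 5).le
  have hbb : 0 ≤ t^5*b^2 := mul_nonneg (pow_pos ht 5).le (sq_nonneg b)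
  rw [abs_le]
  constructor <;> linarith [hu5, hu5', hb6, hb6', h2.1, h2.2, hw, hw2]

lemma gceS1 {a c h t : ℝ} (ha : 0 ≤ a) (hc : 0 ≤ c) (ht : 0 < t) (ht1 : t ≤ 1)
    (hta : a^2*t^2 ≤ 1) (htc : (2*(c+a^4))*t ≤ 1/4) (hh : 0 ≤ h)
    (hr : |h^2 - (t^2 - a^2*t^4/12)| ≤ c*t^5) :
    |h - (t - a^2*t^3/24)| ≤ (2*(c+a^4))*t^4 ∧ t/4 ≤ h ∧ |t - h| ≤ (a^2 + 2*(c+a^4))*t^3 := by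
  obtain ⟨ht2, ht3, ht4, ht5, ht6, ht8⟩ := gceA1 ht ht1
  have ha2 : (0:ℝ) ≤ a^2 := sq_nonneg a
  have ha4 : (0:ℝ) ≤ a^4 := by positivity
  have hm2 : t/2 ≤ t - a^2*t^3/24 := by linarith [mul_le_mul_of_nonneg_right hta ht.le]
  have hmt : t - a^2*t^3/24 ≤ t := by linarith [mul_nonneg ha2 (pow_pos ht 3).le]
  have hsqd : |h^2 - (t - a^2*t^3/24)^2| ≤ (c + a^4) * t^5 := by
    have h1 := abs_le.mp hr
    have h6 : a^4*t^6 ≤ a^4*t^5 := mul_le_mul_of_nonneg_left ht6 ha4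
    rw [abs_le]
    constructor <;> linarith [h1.1, h1.2, h6, mul_nonneg ha4 (pow_pos ht 6).le]
  have hnn : (0:ℝ) ≤ h + (t - a^2*t^3/24) := by linarith
  have hhm : |h - (t - a^2*t^3/24)| ≤ (2*(c+a^4)) * t^4 := by
    have habs : |h - (t - a^2*t^3/24)| * (h + (t - a^2*t^3/24)) = |h^2 - (t - a^2*t^3/24)^2| := by
      rw [← abs_of_nonneg hnn, ← abs_mul]
      congr 1; ring
    have h1 : |h - (t - a^2*t^3/24)| * (t/2) ≤ |h - (t - a^2*t^3/24)| * (h + (t - a^2*t^3/24)) := by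
      apply mul_le_mul_of_nonneg_left _ (abs_nonneg _)
      linarith
    have h2 : |h - (t - a^2*t^3/24)| * (t/2) ≤ (c + a^4) * t^5 := by
      rw [habs] at h1; exact le_trans h1 hsqd
    have h3 : |h - (t - a^2*t^3/24)| * t ≤ ((2*(c+a^4)) * t^4) * t := by
      have h4 : (c+a^4)*t^5 ≤ (c+a^4)*t^4 := mul_le_mul_of_nonneg_left ht5 (by linarith)
      linarith
    exact le_of_mul_le_mul_right h3 ht
  have h1 := abs_le.mp hhm
  have hD2t4 : (2*(c+a^4)) * t^4 ≤ t/4 := by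
    have hx : ((2*(c+a^4))*t)*t^3 ≤ (1/4)*t^3 := mul_le_mul_of_nonneg_right htc (by positivity)
    have hy : t^3 ≤ t := le_trans ht3 ht2
    linarith
  have hge : t/4 ≤ h := by linarith
  refine ⟨hhm, hge, ?_⟩
  have h2' : a^2*t^3/24 ≤ a^2*t^3 := by linarith [mul_nonneg ha2 (pow_pos ht 3).le]
  have h3 : (2*(c+a^4))*t^4 ≤ (2*(c+a^4))*t^3 := mul_le_mul_of_nonneg_left ht4 (by linarith)
  rw [abs_le]
  constructor <;> linarith [h1.1, h1.2, h2', h3]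

lemma gceS2 {a e X t : ℝ} (ha : 0 ≤ a) (he : 0 ≤ e) (ht : 0 < t) (ht1 : t ≤ 1)
    (hX : 0 ≤ X) (hN : |X - (t^2/2)*a| ≤ e*t^3) :
    |X^2 - a^2*t^4/4| ≤ (e*(a+e))*t^5 := by
  obtain ⟨ht2, ht3, -, -, -, -⟩ := gceA1 ht ht1
  have h1 := abs_le.mp hN
  have het : e*t^3 ≤ e*t^2 := mul_le_mul_of_nonneg_left ht3 he
  have hform : X^2 - a^2*t^4/4 = (X - (t^2/2)*a) * (X + (t^2/2)*a) := by ring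
  rw [hform, abs_mul]
  have h2 : |X + (t^2/2)*a| ≤ (a+e)*t^2 := by
    rw [abs_of_nonneg (by positivity : (0:ℝ) ≤ X + (t^2/2)*a)]
    linarith [h1.2, het, mul_nonneg ha (pow_pos ht 2).le]
  calc |X - (t^2/2)*a| * |X + (t^2/2)*a| ≤ (e*t^3) * ((a+e)*t^2) :=
        mul_le_mul hN h2 (abs_nonneg _) (by positivity)
    _ = (e*(a+e))*t^5 := by ring

lemma gceS3 {a t h N c2 c3 : ℝ} (ha : 0 ≤ a) (hc2 : 0 ≤ c2) (hc3 : 0 ≤ c3)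
    (ht : 0 < t) (ht1 : t ≤ 1) (hge : t/4 ≤ h)
    (hth : |t - h| ≤ (a^2 + c2)*t^3)
    (hhm : |h - (t - a^2*t^3/24)| ≤ c2*t^4)
    (hN : 0 ≤ N) (hN2 : |N - a^2*t^4/4| ≤ c3*t^5) :
    |t - (h + N/(6*h))| ≤ (c2 + (c3 + a^2*(a^2+c2)))*t^4 := by
  obtain ⟨ht2, ht3, ht4, ht5, ht6, ht8⟩ := gceA1 ht ht1
  have hhpos : 0 < h := lt_of_lt_of_le (by positivity) hge
  have ha2 : (0:ℝ) ≤ a^2 := sq_nonneg a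
  have hcnn : (0:ℝ) ≤ a^2*(a^2+c2) := by positivity
  have hnum : |N - a^2*t^3*h/4| ≤ (c3 + a^2*(a^2+c2)) * t^5 := by
    have hform : N - a^2*t^3*h/4 = (N - a^2*t^4/4) + (a^2*t^3/4)*(t - h) := by ring
    rw [hform]
    have h1 := abs_le.mp hN2
    have h2 := abs_le.mp hth
    have ha2nn : (0:ℝ) ≤ a^2*t^3/4 := by positivity
    have h3 : (a^2*t^3/4)*((a^2+c2)*t^3) ≤ a^2*(a^2+c2)*t^5 := by
      have hx : (a^2*t^3/4)*((a^2+c2)*t^3) = (a^2*(a^2+c2))*t^6/4 := by ring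
      have hy : (a^2*(a^2+c2))*t^6 ≤ (a^2*(a^2+c2))*t^5 := mul_le_mul_of_nonneg_left ht6 hcnn
      have hz : (0:ℝ) ≤ (a^2*(a^2+c2))*t^5 := mul_nonneg hcnn (pow_pos ht 5).le
      linarith
    rw [abs_le]
    constructor <;>
      linarith [h1.1, h1.2, h3, mul_le_mul_of_nonneg_left h2.2 ha2nn,
        mul_le_mul_of_nonneg_left (neg_le.mp h2.1) ha2nn]
  have hqc : |N/(6*h) - a^2*t^3/24| ≤ (c3 + a^2*(a^2+c2)) * t^4 := by
    have hform : N/(6*h) - a^2*t^3/24 = (N - a^2*t^3*h/4) / (6*h) := by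
      field_simp; ring
    rw [hform, abs_div, abs_of_pos (by positivity : (0:ℝ) < 6*h)]
    rw [div_le_iff₀ (by positivity : (0:ℝ) < 6*h)]
    have hc5 : (0:ℝ) ≤ c3 + a^2*(a^2+c2) := by positivity
    have h2 : t ≤ 6*h := by linarith
    have h3 : ((c3 + a^2*(a^2+c2))*t^4)*t ≤ ((c3 + a^2*(a^2+c2))*t^4)*(6*h) :=
      mul_le_mul_of_nonneg_left h2 (by positivity)
    calc |N - a^2*t^3*h/4| ≤ (c3 + a^2*(a^2+c2))*t^5 := hnum
      _ = ((c3 + a^2*(a^2+c2))*t^4)*t := by ring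
      _ ≤ ((c3 + a^2*(a^2+c2))*t^4)*(6*h) := h3
  have hsplit : t - (h + N/(6*h)) = ((t - a^2*t^3/24) - h) + (a^2*t^3/24 - N/(6*h)) := by ring
  rw [hsplit]
  have h1 := abs_le.mp hhm
  have h2 := abs_le.mp hqc
  rw [abs_le]
  constructor <;> [linarith [abs_nonneg (h - (t - a^2*t^3/24))]; linarith]
lemma gce_core {E : Type*} [NormedAddCommGroup E] [InnerProductSpace ℝ E]
    {T A B : E} (hT : ‖T‖ = 1) (hTA : ⟪T, A⟫ = 0) (hTB : ⟪T, B⟫ = -(‖A‖^2))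
    (f : E → E) (hfadd : ∀ x y : E, f (x + y) = f x + f y)
    (hfsmul : ∀ (c : ℝ) (x : E), f (c • x) = c • f x)
    (hfnorm : ∀ x : E, ‖f x‖ ≤ ‖x‖) (hfT : f T = 0) (hfA : f A = A)
    {C : ℝ} (hC : 1 ≤ C) :
    ∃ d > (0:ℝ), ∃ K : ℝ, ∀ t : ℝ, 0 < t → t ≤ d → ∀ Δ : E,
      ‖Δ - (t • T + (t^2/2) • A + (t^3/6) • B)‖ ≤ C * t^4 →
      t/4 ≤ ‖Δ‖ ∧ |t - (‖Δ‖ + ‖f Δ‖^2 / (6 * ‖Δ‖))| ≤ K * t^4 := by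
  have hC0 : (0:ℝ) < C := lt_of_lt_of_le one_pos hC
  have ha : (0:ℝ) ≤ ‖A‖ := norm_nonneg A
  have hb : (0:ℝ) ≤ ‖B‖ := norm_nonneg B
  obtain ⟨D1, hD1_def⟩ : ∃ x : ℝ, x = ‖A‖*‖B‖ + ‖B‖^2 + 2*C*(1+‖A‖+‖B‖) + C^2 := ⟨_, rfl⟩
  have hD1 : 0 ≤ D1 := by
    rw [hD1_def]; positivity
  obtain ⟨D2, hD2_def⟩ : ∃ x : ℝ, x = 2*(D1 + ‖A‖^4) := ⟨_, rfl⟩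
  have hD2 : 0 ≤ D2 := by rw [hD2_def]; positivity
  obtain ⟨D3, hD3_def⟩ : ∃ x : ℝ, x = (‖B‖+C)*(‖A‖+‖B‖+C) := ⟨_, rfl⟩
  have hD3 : 0 ≤ D3 := by rw [hD3_def]; positivity
  obtain ⟨D5, hD5_def⟩ : ∃ x : ℝ, x = D3 + ‖A‖^2*(‖A‖^2+D2) := ⟨_, rfl⟩
  have hD5 : 0 ≤ D5 := by rw [hD5_def]; positivity
  refine ⟨min 1 (min (1/(‖A‖+1)) (1/(4*D2+1))), lt_min one_pos
      (lt_min (div_pos one_pos (by linarith)) (div_pos one_pos (by linarith))),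
    D2 + D5, ?_⟩
  intro t ht htd Δ hP
  have ht1 : t ≤ 1 := le_trans htd (min_le_left _ _)
  have hta : ‖A‖^2 * t^2 ≤ 1 := by
    have h1 : t ≤ 1/(‖A‖+1) := le_trans htd (le_trans (min_le_right _ _) (min_le_left _ _))
    exact gceA2 ha ht.le ((le_div_iff₀ (by linarith : (0:ℝ) < ‖A‖+1)).mp h1)
  have htD2 : D2 * t ≤ 1/4 := by
    have h1 : t ≤ 1/(4*D2+1) := le_trans htd (le_trans (min_le_right _ _) (min_le_right _ _))
    exact gceA3 hD2 ht ((le_div_iff₀ (by linarith : (0:ℝ) < 4*D2+1)).mp h1)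
  -- inner product identities
  have e1 : ⟪T, T⟫ = 1 := by rw [real_inner_self_eq_norm_sq, hT]; norm_num
  have e2 : ⟪A, T⟫ = 0 := by rw [real_inner_comm]; exact hTA
  have e3 : ⟪B, T⟫ = -(‖A‖^2) := by rw [real_inner_comm]; exact hTB
  have e4 : ⟪B, A⟫ = ⟪A, B⟫ := real_inner_comm _ _
  have e5 : ⟪A, A⟫ = ‖A‖^2 := real_inner_self_eq_norm_sq A
  have e6 : ⟪B, B⟫ = ‖B‖^2 := real_inner_self_eq_norm_sq B
  obtain ⟨S, hS_def⟩ : ∃ x : E, x = t • T + (t^2/2) • A + (t^3/6) • B := ⟨_, rfl⟩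
  obtain ⟨P, hP_def⟩ : ∃ x : E, x = Δ - S := ⟨_, rfl⟩
  have hΔ : Δ = S + P := by rw [hP_def]; abel
  have hPn : ‖P‖ ≤ C * t^4 := by rw [hP_def, hS_def]; exact hP
  have hSS : ⟪S, S⟫ = t^2 - ‖A‖^2*t^4/12 + t^5*⟪A,B⟫/6 + t^6*‖B‖^2/36 := by
    rw [hS_def]
    simp only [inner_add_left, inner_add_right, real_inner_smul_left,
      real_inner_smul_right, e1, e2, e3, e4, hTA, hTB, e5, e6]
    ring
  have hSnorm : ‖S‖ ≤ (1+‖A‖+‖B‖) * t := by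
    refine gceA4 ha hb ht ht1 ?_
    have h1 : ‖S‖ ≤ ‖t • T‖ + ‖(t^2/2) • A‖ + ‖(t^3/6) • B‖ := by
      rw [hS_def]; exact norm_add₃_le
    rw [norm_smul, norm_smul, norm_smul, hT, Real.norm_eq_abs, Real.norm_eq_abs,
      Real.norm_eq_abs, abs_of_pos ht, abs_of_pos (by positivity : (0:ℝ) < t^2/2),
      abs_of_pos (by positivity : (0:ℝ) < t^3/6)] at h1
    calc ‖S‖ ≤ t * 1 + t^2/2 * ‖A‖ + t^3/6 * ‖B‖ := h1
      _ = t + t^2/2*‖A‖ + t^3/6*‖B‖ := by ring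
  have hΔΔ : ‖Δ‖^2 = ⟪S,S⟫ + 2*⟪S,P⟫ + ‖P‖^2 := by
    rw [← real_inner_self_eq_norm_sq, hΔ, real_inner_add_add_self, real_inner_self_eq_norm_sq,
      real_inner_self_eq_norm_sq]
  have hSP : |⟪S,P⟫| ≤ (1+‖A‖+‖B‖)*t*(C*t^4) := by
    refine le_trans (abs_real_inner_le_norm S P) ?_
    exact mul_le_mul hSnorm hPn (norm_nonneg P) (by positivity)
  have hAB : |⟪A,B⟫| ≤ ‖A‖*‖B‖ := abs_real_inner_le_norm A B
  have hPP : ‖P‖^2 ≤ C^2 * t^5 := by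
    obtain ⟨-, -, -, -, -, h8⟩ := gceA1 ht ht1
    have h1 : ‖P‖^2 ≤ (C*t^4)^2 := pow_le_pow_left₀ (norm_nonneg P) hPn 2
    have h2 : (C*t^4)^2 = C^2*t^8 := by ring
    have h3 : C^2*t^8 ≤ C^2*t^5 := mul_le_mul_of_nonneg_left h8 (by positivity)
    linarith
  have hr : |‖Δ‖^2 - (t^2 - ‖A‖^2*t^4/12)| ≤ D1 * t^5 := by
    have hform : ‖Δ‖^2 - (t^2 - ‖A‖^2*t^4/12)
        = t^5*⟪A,B⟫/6 + t^6*‖B‖^2/36 + 2*⟪S,P⟫ + ‖P‖^2 := by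
      rw [hΔΔ, hSS]; ring
    rw [hform, hD1_def]
    exact gceA5 ha hb hC ht ht1 hAB hSP (sq_nonneg _) hPP
  have htc : (2*(D1 + ‖A‖^4))*t ≤ 1/4 := by rw [← hD2_def]; exact htD2
  obtain ⟨hhm, hge, hth⟩ := gceS1 ha hD1 ht ht1 hta htc (norm_nonneg Δ) hr
  rw [← hD2_def] at hhm hth
  -- projection part
  have hfS : f S = (t^2/2) • A + (t^3/6) • f B := by
    rw [hS_def, hfadd, hfadd, hfsmul, hfsmul, hfsmul, hfT, hfA, smul_zero, zero_add]
  have hfΔform : f Δ - (t^2/2) • A = (t^3/6) • f B + f P := by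
    rw [hΔ, hfadd, hfS]; abel
  have hfnear : ‖f Δ - (t^2/2) • A‖ ≤ (‖B‖ + C)*t^3 := by
    rw [hfΔform]
    obtain ⟨-, -, h4, -, -, -⟩ := gceA1 ht ht1
    refine le_trans (norm_add_le _ _) ?_
    have h1 : ‖(t^3/6) • f B‖ ≤ t^3/6 * ‖B‖ := by
      rw [norm_smul, Real.norm_eq_abs, abs_of_pos (by positivity : (0:ℝ) < t^3/6)]
      exact mul_le_mul_of_nonneg_left (hfnorm B) (by positivity)
    have h2 : ‖f P‖ ≤ C*t^4 := le_trans (hfnorm P) hPn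
    have h3 : C*t^4 ≤ C*t^3 := mul_le_mul_of_nonneg_left h4 hC0.le
    have h5 : t^3/6*‖B‖ ≤ t^3*‖B‖ := by
      have := mul_nonneg (pow_pos ht 3).le hb
      linarith
    have h6 : t^3*‖B‖ = ‖B‖*t^3 := by ring
    linarith [h1, h2, h3, h5]
  have hN : |‖f Δ‖ - (t^2/2)*‖A‖| ≤ (‖B‖+C)*t^3 := by
    have h0 : ‖(t^2/2) • A‖ = (t^2/2)*‖A‖ := by
      rw [norm_smul, Real.norm_eq_abs, abs_of_pos (by positivity : (0:ℝ) < t^2/2)]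
    rw [← h0]
    exact le_trans (abs_norm_sub_norm_le _ _) hfnear
  have hN2 : |‖f Δ‖^2 - ‖A‖^2*t^4/4| ≤ D3*t^5 := by
    rw [hD3_def]
    have := gceS2 ha (by positivity : (0:ℝ) ≤ ‖B‖+C) ht ht1 (norm_nonneg (f Δ)) hN
    calc |‖f Δ‖^2 - ‖A‖^2*t^4/4| ≤ ((‖B‖+C)*(‖A‖+(‖B‖+C)))*t^5 := this
      _ = ((‖B‖+C)*(‖A‖+‖B‖+C))*t^5 := by ring
  refine ⟨hge, ?_⟩
  have hfinal := gceS3 ha hD2 hD3 ht ht1 hge hth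
    hhm (sq_nonneg ‖f Δ‖) hN2
  calc |t - (‖Δ‖ + ‖f Δ‖^2/(6*‖Δ‖))| ≤ (D2 + (D3 + ‖A‖^2*(‖A‖^2+D2)))*t^4 := hfinal
    _ = (D2 + D5)*t^4 := by rw [hD5_def]

open Asymptotics in
/-- For a unit-speed `C^4` curve `γ : ℝ → ℝ^p` near `0`, with
`Π` the orthogonal projection onto the orthogonal complement of the line
spanned by `γ′(0)` and `h(t) := ‖γ(t) − γ(0)‖` (positive for small `t > 0`),
as `t → 0⁺`, `| t − ( h(t) + ‖Π(γ(t) − γ(0))‖²/(6·h(t)) ) | = O(t⁴)`. -/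
theorem covariance_corrected_geodesic_estimator_curve
    (p : ℕ) (hp : 1 ≤ p) (γ : ℝ → EuclideanSpace ℝ (Fin p))
    (U : Set ℝ) (hU : U ∈ 𝓝 (0 : ℝ)) (hγ : ContDiffOn ℝ 4 γ U)
    (harc : ∀ s ∈ U, ‖deriv γ s‖ = 1) :
    (∀ᶠ t in 𝓝[>] (0 : ℝ), 0 < ‖γ t - γ 0‖) ∧
    (fun t : ℝ =>
        |t - (‖γ t - γ 0‖ +
          ‖(Submodule.orthogonalProjection ((Submodule.span ℝ {deriv γ 0})ᗮ) (γ t - γ 0) :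
              EuclideanSpace ℝ (Fin p))‖ ^ 2 / (6 * ‖γ t - γ 0‖))|)
      =O[𝓝[>] (0 : ℝ)] fun t => t ^ 4 := by
  obtain ⟨ε, hε, hsub⟩ : ∃ ε > 0, Metric.ball (0:ℝ) ε ⊆ U := Metric.mem_nhds_iff.mp hU
  set V : Set ℝ := Metric.ball (0:ℝ) ε with hV_def
  have hVopen : IsOpen V := Metric.isOpen_ball
  have h0V : (0:ℝ) ∈ V := Metric.mem_ball_self hε
  have hγV : ContDiffOn ℝ 4 γ V := hγ.mono hsub
  -- derivative facts
  have hD : ∀ m : ℕ, ((m : ℕ) : WithTop ℕ∞) < 4 → ∀ x ∈ V,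
      HasDerivAt (iteratedDeriv m γ) (iteratedDeriv (m+1) γ x) x := by
    intro m hm x hx
    rw [iteratedDeriv_succ]
    exact (gce_diffat hVopen hγV hm hx).hasDerivAt
  have hlt1 : ((1 : ℕ) : WithTop ℕ∞) < 4 := by
    exact_mod_cast (by norm_num : (1:ℕ) < 4)
  have hlt2 : ((2 : ℕ) : WithTop ℕ∞) < 4 := by
    exact_mod_cast (by norm_num : (2:ℕ) < 4)
  have hd1 : ∀ x ∈ V, HasDerivAt (deriv γ) (iteratedDeriv 2 γ x) x := by
    intro x hx
    have := hD 1 hlt1 x hx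
    rwa [iteratedDeriv_one] at this
  have hd2 : ∀ x ∈ V, HasDerivAt (iteratedDeriv 2 γ) (iteratedDeriv 3 γ x) x := by
    intro x hx
    exact hD 2 hlt2 x hx
  -- unit speed inner product identities
  have hψ0 : ∀ x ∈ V, ⟪deriv γ x, iteratedDeriv 2 γ x⟫ = 0 := by
    intro x hx
    have h1 := hd1 x hx
    have h2 : HasDerivAt (fun s => ⟪deriv γ s, deriv γ s⟫)
        (⟪deriv γ x, iteratedDeriv 2 γ x⟫ + ⟪iteratedDeriv 2 γ x, deriv γ x⟫) x :=
      HasDerivAt.inner ℝ h1 h1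
    have h3 : (fun s => ⟪deriv γ s, deriv γ s⟫) =ᶠ[𝓝 x] fun _ => (1:ℝ) := by
      filter_upwards [hVopen.mem_nhds hx] with y hy
      rw [real_inner_self_eq_norm_sq, harc y (hsub hy)]
      norm_num
    have h4 : deriv (fun s => ⟪deriv γ s, deriv γ s⟫) x = 0 := by
      rw [h3.deriv_eq, deriv_const]
    have h5 := h2.deriv
    rw [h4] at h5
    linarith [h5, real_inner_comm (deriv γ x) (iteratedDeriv 2 γ x)]
  have hTA : ⟪deriv γ 0, iteratedDeriv 2 γ 0⟫ = 0 := hψ0 0 h0V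
  have hTB : ⟪deriv γ 0, iteratedDeriv 3 γ 0⟫ = -(‖iteratedDeriv 2 γ 0‖^2) := by
    have h1 := hd1 0 h0V
    have h2 := hd2 0 h0V
    have h3 : HasDerivAt (fun s => ⟪deriv γ s, iteratedDeriv 2 γ s⟫)
        (⟪deriv γ 0, iteratedDeriv 3 γ 0⟫ + ⟪iteratedDeriv 2 γ 0, iteratedDeriv 2 γ 0⟫) 0 :=
      HasDerivAt.inner ℝ h1 h2
    have h4 : (fun s => ⟪deriv γ s, iteratedDeriv 2 γ s⟫) =ᶠ[𝓝 (0:ℝ)] fun _ => (0:ℝ) := by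
      filter_upwards [hVopen.mem_nhds h0V] with y hy
      exact hψ0 y hy
    have h5 : deriv (fun s => ⟪deriv γ s, iteratedDeriv 2 γ s⟫) 0 = 0 := by
      rw [h4.deriv_eq, deriv_const]
    have h6 := h3.deriv
    rw [h5, real_inner_self_eq_norm_sq] at h6
    linarith
  have hT : ‖deriv γ 0‖ = 1 := harc 0 (mem_of_mem_nhds hU)
  -- Taylor expansion with remainder
  set δ : ℝ := ε/2 with hδ_def
  have hδ : 0 < δ := by positivity
  have hIccV : Icc (0:ℝ) δ ⊆ V := by
    intro x hx
    rw [hV_def, Metric.mem_ball, Real.dist_eq, sub_zero]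
    rw [abs_of_nonneg hx.1]
    linarith [hx.2]
  have hγI : ContDiffOn ℝ ((3:ℕ) + 1) γ (Icc 0 δ) := by
    have : ((3:ℕ) + 1 : WithTop ℕ∞) = 4 := by norm_num
    rw [this]
    exact hγV.mono hIccV
  obtain ⟨C0, hC0⟩ := exists_taylor_mean_remainder_bound hδ.le hγI
  have htay : ∀ x : ℝ, taylorWithinEval γ 3 (Icc 0 δ) 0 x
      = γ 0 + x • deriv γ 0 + (x^2/2) • iteratedDeriv 2 γ 0 + (x^3/6) • iteratedDeriv 3 γ 0 := by
    intro x
    rw [taylor_within_apply]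
    rw [Finset.sum_range_succ, Finset.sum_range_succ, Finset.sum_range_succ,
      Finset.sum_range_one]
    rw [gce_itdw_Icc hVopen hγV hδ hIccV 0 (by norm_num),
      gce_itdw_Icc hVopen hγV hδ hIccV 1 (by norm_num),
      gce_itdw_Icc hVopen hγV hδ hIccV 2 (by norm_num),
      gce_itdw_Icc hVopen hγV hδ hIccV 3 (by norm_num)]
    rw [iteratedDeriv_zero, iteratedDeriv_one]
    norm_num [Nat.factorial]
    module
  -- apply the core estimate
  set C : ℝ := max C0 1 with hC_def
  have hC : 1 ≤ C := le_max_right _ _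
  have hRbound : ∀ t : ℝ, 0 < t → t ≤ δ →
      ‖(γ t - γ 0) - (t • deriv γ 0 + (t^2/2) • iteratedDeriv 2 γ 0
        + (t^3/6) • iteratedDeriv 3 γ 0)‖ ≤ C * t^4 := by
    intro t ht htδ
    have h1 := hC0 t ⟨ht.le, htδ⟩
    rw [htay t] at h1
    have h2 : γ t - (γ 0 + t • deriv γ 0 + (t^2/2) • iteratedDeriv 2 γ 0
        + (t^3/6) • iteratedDeriv 3 γ 0)
        = (γ t - γ 0) - (t • deriv γ 0 + (t^2/2) • iteratedDeriv 2 γ 0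
        + (t^3/6) • iteratedDeriv 3 γ 0) := by abel
    rw [h2] at h1
    have h3 : C0 * (t - 0)^(3+1) ≤ C * t^4 := by
      have h4 : (t - 0)^(3+1) = t^4 := by ring
      rw [h4]
      exact mul_le_mul_of_nonneg_right (le_max_left _ _) (by positivity)
    exact le_trans h1 h3
  -- the projection map
  set Kspan : Submodule ℝ (EuclideanSpace ℝ (Fin p)) := (Submodule.span ℝ {deriv γ 0})ᗮ
    with hKspan_def
  set f : EuclideanSpace ℝ (Fin p) → EuclideanSpace ℝ (Fin p) :=
    fun x => (Submodule.orthogonalProjectionOnto Kspan x : EuclideanSpace ℝ (Fin p)) with hf_def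
  have hfadd : ∀ x y, f (x + y) = f x + f y := by
    intro x y; simp [hf_def]
  have hfsmul : ∀ (c : ℝ) (x : EuclideanSpace ℝ (Fin p)), f (c • x) = c • f x := by
    intro c x; simp [hf_def]
  have hfnorm : ∀ x, ‖f x‖ ≤ ‖x‖ := by
    intro x
    have h1 : ‖Submodule.orthogonalProjectionOnto Kspan x‖ ≤ ‖Submodule.orthogonalProjectionOnto Kspan‖ * ‖x‖ :=
      (Submodule.orthogonalProjectionOnto Kspan).le_opNorm x
    have h2 := Submodule.orthogonalProjectionOnto_norm_le Kspan
    have h3 : ‖f x‖ = ‖Submodule.orthogonalProjectionOnto Kspan x‖ := rfl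
    rw [h3]
    nlinarith [norm_nonneg x]
  have hfT : f (deriv γ 0) = 0 := by
    rw [hf_def]
    simp only
    rw [Submodule.orthogonalProjectionOnto_apply_of_mem_orthogonal]
    · rfl
    · exact (Submodule.le_orthogonal_orthogonal _) (Submodule.mem_span_singleton_self _)
  have hfA : f (iteratedDeriv 2 γ 0) = iteratedDeriv 2 γ 0 := by
    rw [hf_def]
    simp only
    refine (Submodule.starProjection_eq_self_iff (K := Kspan)).mpr ?_
    exact Submodule.mem_orthogonal_singleton_iff_inner_right.mpr hTA
  obtain ⟨d, hd, K, hK⟩ := gce_core hT hTA hTB f hfadd hfsmul hfnorm hfT hfA hC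
  -- eventual bounds
  have hev : ∀ᶠ t in 𝓝[>] (0:ℝ), 0 < t ∧ t < min d δ := by
    have h1 : ∀ᶠ t in 𝓝[>] (0:ℝ), 0 < t := self_mem_nhdsWithin
    have h2 : ∀ᶠ t in 𝓝 (0:ℝ), t < min d δ := by
      apply Filter.Tendsto.eventually_lt_const (lt_min hd hδ)
      exact tendsto_id
    exact h1.and (h2.filter_mono nhdsWithin_le_nhds)
  have hmain : ∀ᶠ t in 𝓝[>] (0:ℝ), t/4 ≤ ‖γ t - γ 0‖ ∧
      |t - (‖γ t - γ 0‖ + ‖f (γ t - γ 0)‖^2 / (6 * ‖γ t - γ 0‖))| ≤ K * t^4 := by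
    filter_upwards [hev] with t ⟨ht0, htm⟩
    have htd : t ≤ d := le_of_lt (lt_of_lt_of_le htm (min_le_left _ _))
    have htδ : t ≤ δ := le_of_lt (lt_of_lt_of_le htm (min_le_right _ _))
    exact hK t ht0 htd (γ t - γ 0) (hRbound t ht0 htδ)
  constructor
  · filter_upwards [hmain, self_mem_nhdsWithin] with t h1 ht0
    have ht0' : (0:ℝ) < t := ht0
    linarith [h1.1]
  · rw [Asymptotics.isBigO_iff]
    refine ⟨K, ?_⟩
    filter_upwards [hmain, self_mem_nhdsWithin] with t h1 ht0
    have h2 := h1.2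
    rw [Real.norm_eq_abs, Real.norm_eq_abs, abs_abs]
    have h3 : |t^4| = t^4 := abs_of_nonneg (by positivity)
    rw [h3]
    exact h2
end

section
/- Let d ≥ 1, let Ω ⊆ ℝ^d be open, let x ∈ Ω, let Φ : Ω → ℝ^d be three times continuously differentiable, and let P : Ω → ℝ be twice continuously differentiable with P(x) > 0 and P ≥ 0 on Ω. Then, as ε → 0⁺, [∫_{B_ε(x)} (Φ(u) − Φ(x))(Φ(u) − Φ(x))ᵀ P(u) du] / (ε² ∫_{B_ε(x)} P(u) du) = (1/(d+2))·DΦ(x)·DΦ(x)ᵀ + O(ε²). -/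
open Asymptotics Filter Topology MeasureTheory Metric Matrix

open Set

noncomputable abbrev EucAux (d : ℕ) := EuclideanSpace ℝ (Fin d)

lemma setIntegralCompIsometryAux {d : ℕ} (e : EucAux d ≃ₗᵢ[ℝ] EucAux d) (f : EucAux d → ℝ)
    (ε : ℝ) :
    ∫ v in closedBall (0 : EucAux d) ε, f (e v) = ∫ v in closedBall (0 : EucAux d) ε, f v := by
  have h := e.measurePreserving
  have hpre : (⇑e) ⁻¹' closedBall (0 : EucAux d) ε = closedBall 0 ε := by
    ext v; simp [mem_closedBall, dist_eq_norm, e.norm_map]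
  rw [← h.setIntegral_preimage_emb e.toHomeomorph.measurableEmbedding f (closedBall 0 ε), hpre]

lemma setIntegralTranslateAux {d : ℕ} (x : EucAux d) (ε : ℝ) (f : EucAux d → ℝ) :
    ∫ u in closedBall x ε, f u = ∫ v in closedBall (0 : EucAux d) ε, f (x + v) := by
  have h : MeasurePreserving (fun v : EucAux d => x + v) volume volume :=
    measurePreserving_add_left volume x
  have hpre : (fun v : EucAux d => x + v) ⁻¹' closedBall x ε = closedBall 0 ε := by
    ext v; simp [mem_closedBall, dist_eq_norm]
  rw [← h.setIntegral_preimage_emb (MeasurableEquiv.addLeft x).measurableEmbedding f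
    (closedBall x ε), hpre]

lemma contCoordAux {d : ℕ} (k : Fin d) : Continuous fun v : EucAux d => v k :=
  (EuclideanSpace.proj (𝕜 := ℝ) k).continuous

lemma absCoordLeAux {d : ℕ} (w : EucAux d) (i : Fin d) : |w i| ≤ ‖w‖ := by
  rw [EuclideanSpace.norm_eq, ← Real.sqrt_sq_eq_abs]
  apply Real.sqrt_le_sqrt
  have : w i ^ 2 = ‖w i‖ ^ 2 := by rw [Real.norm_eq_abs, sq_abs]
  rw [this]
  exact Finset.single_le_sum (f := fun q => ‖w q‖ ^ 2) (fun q _ => by positivity)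
    (Finset.mem_univ i)

lemma normSqEqSumAux {d : ℕ} (v : EucAux d) : ‖v‖ ^ 2 = ∑ q : Fin d, v q ^ 2 := by
  rw [EuclideanSpace.norm_eq, Real.sq_sqrt (by positivity)]
  simp [Real.norm_eq_abs, sq_abs]

lemma momentNormSqAux {d : ℕ} (hd : 1 ≤ d) {ε : ℝ} (hε : 0 ≤ ε) :
    ∫ v in closedBall (0 : EucAux d) ε, ‖v‖ ^ 2
      = d * (volume (closedBall (0 : EucAux d) 1)).toReal * ε ^ (d + 2) / (d + 2) := by
  haveI : Nonempty (Fin d) := ⟨⟨0, hd⟩⟩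
  haveI : Nontrivial (EucAux d) := inferInstance
  rw [← integral_indicator measurableSet_closedBall]
  have h1 : (fun v : EucAux d => indicator (closedBall 0 ε) (fun v => ‖v‖ ^ 2) v)
      = fun v : EucAux d => (fun t : ℝ => if t ≤ ε then t ^ 2 else 0) ‖v‖ := by
    funext v
    simp [indicator, mem_closedBall, dist_eq_norm]
  rw [h1, integral_fun_norm_addHaar volume (fun t : ℝ => if t ≤ ε then t ^ 2 else 0)]
  have hdim : Module.finrank ℝ (EucAux d) = d := finrank_euclideanSpace_fin
  rw [hdim]
  have h2 : ∫ y in Ioi (0:ℝ), y ^ (d - 1) • (if y ≤ ε then y ^ 2 else 0)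
      = ∫ y in Ioc (0:ℝ) ε, y ^ (d + 1) := by
    rw [← Ioi_inter_Iic, ← setIntegral_indicator measurableSet_Iic]
    apply setIntegral_congr_fun measurableSet_Ioi
    intro y hy
    simp only [indicator, mem_Iic, smul_eq_mul]
    split_ifs with h
    · rw [← pow_add]
      congr 1
      omega
    · ring
  rw [h2]
  have h3 : ∫ y in Ioc (0:ℝ) ε, y ^ (d + 1) = ε ^ (d + 2) / (d + 2) := by
    rw [← intervalIntegral.integral_of_le hε, integral_pow]
    push_cast
    ring
  rw [h3, Measure.addHaar_closedBall_eq_addHaar_ball volume (0 : EucAux d) 1]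
  push_cast
  simp only [nsmul_eq_mul, smul_eq_mul, measureReal_def]
  ring

lemma integralCoordSqAux {d : ℕ} (hd : 1 ≤ d) {ε : ℝ} (hε : 0 ≤ ε) (k : Fin d) :
    ∫ v in closedBall (0 : EucAux d) ε, v k ^ 2
      = (volume (closedBall (0 : EucAux d) 1)).toReal * ε ^ (d + 2) / (d + 2) := by
  have hint : ∀ q : Fin d, IntegrableOn (fun v : EucAux d => v q ^ 2) (closedBall 0 ε) volume :=
    fun q => (((contCoordAux q).pow 2).continuousOn).integrableOn_compact
      (isCompact_closedBall _ _)
  have hswap : ∀ q : Fin d, ∫ v in closedBall (0 : EucAux d) ε, v q ^ 2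
      = ∫ v in closedBall (0 : EucAux d) ε, v k ^ 2 := by
    intro q
    rw [← setIntegralCompIsometryAux (LinearIsometryEquiv.piLpCongrLeft 2 ℝ ℝ (Equiv.swap k q))
      (fun v => v k ^ 2) ε]
    apply setIntegral_congr_fun measurableSet_closedBall
    intro v _
    simp only [LinearIsometryEquiv.piLpCongrLeft_apply, Equiv.piCongrLeft'_apply,
      Equiv.symm_swap]
    rw [Equiv.swap_apply_left]
  have hsum : ∑ q : Fin d, ∫ v in closedBall (0 : EucAux d) ε, v q ^ 2
      = d * (volume (closedBall (0 : EucAux d) 1)).toReal * ε ^ (d + 2) / (d + 2) := by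
    rw [← integral_finset_sum _ (fun q _ => hint q)]
    rw [show (fun v : EucAux d => ∑ q : Fin d, v q ^ 2) = fun v : EucAux d => ‖v‖ ^ 2 by
      funext v; rw [normSqEqSumAux]]
    exact momentNormSqAux hd hε
  have hd0 : (d : ℝ) ≠ 0 := by positivity
  apply mul_left_cancel₀ hd0
  rw [show (d:ℝ) * ((volume (closedBall (0 : EucAux d) 1)).toReal * ε ^ (d + 2) / (d + 2))
      = d * (volume (closedBall (0 : EucAux d) 1)).toReal * ε ^ (d + 2) / (d + 2) from by ring,
    ← hsum, Finset.sum_congr rfl fun q _ => hswap q, Finset.sum_const, Finset.card_univ,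
    Fintype.card_fin, nsmul_eq_mul]

lemma integralCoordMulNeAux {d : ℕ} {ε : ℝ} (k l : Fin d) (hkl : k ≠ l) :
    ∫ v in closedBall (0 : EucAux d) ε, v k * v l = 0 := by
  have h := setIntegralCompIsometryAux
    (LinearIsometryEquiv.piLpCongrRight 2
      (fun i : Fin d => if i = k then LinearIsometryEquiv.neg ℝ (E := ℝ) else
        LinearIsometryEquiv.refl ℝ ℝ))
    (fun v => v k * v l) ε
  have h2 : ∫ v in closedBall (0 : EucAux d) ε, -(v k * v l)
      = ∫ v in closedBall (0 : EucAux d) ε, v k * v l := by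
    rw [← h]
    apply setIntegral_congr_fun measurableSet_closedBall
    intro v _
    simp only [LinearIsometryEquiv.piLpCongrRight_apply]
    simp [hkl, Ne.symm hkl]
  rw [integral_neg] at h2
  linarith

lemma eucSumSingleAux {d : ℕ} (v : EucAux d) :
    (∑ k, v k • EuclideanSpace.single k (1:ℝ)) = v := by
  have h := (EuclideanSpace.basisFun (Fin d) ℝ).sum_repr v
  simpa [EuclideanSpace.basisFun_apply, EuclideanSpace.basisFun_repr] using h

lemma clmApplyCoordAux {d : ℕ} (J : EucAux d →L[ℝ] EucAux d) (v : EucAux d) (i : Fin d) :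
    (J v) i = ∑ k, v k * (J (EuclideanSpace.single k 1)) i := by
  have h0 : (J v) i = ((EuclideanSpace.proj (𝕜 := ℝ) i).comp J) v := rfl
  rw [h0]
  conv_lhs => rw [← eucSumSingleAux v, map_sum]
  apply Finset.sum_congr rfl
  intro k _
  rw [_root_.map_smul]
  simp [EuclideanSpace.proj, smul_eq_mul]

lemma integralJacAux {d : ℕ} (hd : 1 ≤ d) {ε : ℝ} (hε : 0 ≤ ε) (J : EucAux d →L[ℝ] EucAux d)
    (i j : Fin d) :
    ∫ v in closedBall (0 : EucAux d) ε, (J v) i * (J v) j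
      = (∑ k, (J (EuclideanSpace.single k 1)) i * (J (EuclideanSpace.single k 1)) j)
        * ((volume (closedBall (0 : EucAux d) 1)).toReal * ε ^ (d + 2) / (d + 2)) := by
  set c : Fin d → Fin d → ℝ :=
    fun k l => (J (EuclideanSpace.single k 1)) i * (J (EuclideanSpace.single l 1)) j with hc
  have hrw : ∀ v : EucAux d, (J v) i * (J v) j = ∑ k, ∑ l, (v k * v l) * c k l := by
    intro v
    rw [clmApplyCoordAux J v i, clmApplyCoordAux J v j, Finset.sum_mul_sum]
    apply Finset.sum_congr rfl; intro k _
    apply Finset.sum_congr rfl; intro l _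
    simp only [hc]; ring
  rw [setIntegral_congr_fun measurableSet_closedBall (fun v _ => hrw v)]
  have hcont : ∀ k l : Fin d, Continuous fun v : EucAux d => (v k * v l) * c k l :=
    fun k l => ((contCoordAux k).mul (contCoordAux l)).mul continuous_const
  have hint : ∀ k l : Fin d,
      IntegrableOn (fun v : EucAux d => (v k * v l) * c k l) (closedBall 0 ε) volume :=
    fun k l => (hcont k l).continuousOn.integrableOn_compact (isCompact_closedBall _ _)
  rw [integral_finset_sum _ (fun k _ => integrable_finset_sum _ (fun l _ => hint k l))]
  have hin : ∀ k : Fin d, (∫ v in closedBall (0 : EucAux d) ε, ∑ l, (v k * v l) * c k l)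
      = c k k * ((volume (closedBall (0 : EucAux d) 1)).toReal * ε ^ (d + 2) / (d + 2)) := by
    intro k
    rw [integral_finset_sum _ (fun l _ => hint k l)]
    have hval : ∀ l : Fin d, (∫ v in closedBall (0 : EucAux d) ε, (v k * v l) * c k l)
        = (if k = l then
            ((volume (closedBall (0 : EucAux d) 1)).toReal * ε ^ (d + 2) / (d + 2)) else 0)
          * c k l := by
      intro l
      rw [integral_mul_const]
      congr 1
      by_cases h : k = l
      · subst h
        simp only [if_pos rfl]
        rw [show (fun v : EucAux d => v k * v k) = fun v : EucAux d => v k ^ 2 from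
          funext fun v => (sq (v k)).symm]
        exact integralCoordSqAux hd hε k
      · rw [if_neg h]
        exact integralCoordMulNeAux k l h
    rw [Finset.sum_congr rfl (fun l _ => hval l)]
    simp [Finset.sum_ite_eq, mul_comm]
  rw [Finset.sum_congr rfl (fun k _ => hin k), ← Finset.sum_mul]

lemma volClosedBallAux {d : ℕ} {ε : ℝ} (hε : 0 ≤ ε) (x : EucAux d) :
    (volume (closedBall x ε)).toReal
      = (volume (closedBall (0 : EucAux d) 1)).toReal * ε ^ d := by
  rw [Measure.addHaar_closedBall' volume x hε, ENNReal.toReal_mul,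
    ENNReal.toReal_ofReal (by positivity), finrank_euclideanSpace_fin]
  ring
variable {E F : Type*} [NormedAddCommGroup E] [NormedSpace ℝ E]
  [NormedAddCommGroup F] [NormedSpace ℝ F]

lemma taylorOneAux {Ω : Set E} (hΩ : IsOpen Ω) {x : E} (hx : x ∈ Ω) {f : E → F}
    (hf : ContDiffOn ℝ 2 f Ω) :
    ∃ r > 0, closedBall x r ⊆ Ω ∧ ∃ C, 0 ≤ C ∧ ∀ v : E, ‖v‖ ≤ r →
      ‖f (x + v) - f x - fderiv ℝ f x v‖ ≤ C * ‖v‖ ^ 2 := by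
  have hx2 : ContDiffAt ℝ 2 f x := hf.contDiffAt (hΩ.mem_nhds hx)
  have h1 : ContDiffAt ℝ 1 (fderiv ℝ f) x := hx2.fderiv_right (by norm_num)
  obtain ⟨K, t, ht, hlip⟩ := h1.exists_lipschitzOnWith
  obtain ⟨r, hr0, hsub⟩ := Metric.nhds_basis_closedBall.mem_iff.1
    (Filter.inter_mem ht (hΩ.mem_nhds hx))
  refine ⟨r, hr0, hsub.trans inter_subset_right, K, K.coe_nonneg, fun v hv => ?_⟩
  set u := x + v with hu
  have huball : u ∈ closedBall x ‖v‖ := by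
    simp [hu, mem_closedBall, dist_eq_norm]
  have hxball : x ∈ closedBall x ‖v‖ := mem_closedBall_self (norm_nonneg v)
  have hseg : segment ℝ x u ⊆ closedBall x ‖v‖ :=
    (convex_closedBall x ‖v‖).segment_subset hxball huball
  have hsegr : segment ℝ x u ⊆ closedBall x r :=
    hseg.trans (closedBall_subset_closedBall hv)
  have hder : ∀ w ∈ segment ℝ x u, HasFDerivWithinAt f (fderiv ℝ f w) (segment ℝ x u) w := by
    intro w hw
    have hwΩ : w ∈ Ω := inter_subset_right (hsub (hsegr hw))
    exact ((hf.contDiffAt (hΩ.mem_nhds hwΩ)).differentiableAt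
      (by norm_num)).hasFDerivAt.hasFDerivWithinAt
  have hbound : ∀ w ∈ segment ℝ x u, ‖fderiv ℝ f w - fderiv ℝ f x‖ ≤ (K : ℝ) * ‖v‖ := by
    intro w hw
    have hwt : w ∈ t := (inter_subset_left (hsub (hsegr hw)))
    have hxt : x ∈ t := inter_subset_left (hsub (mem_closedBall_self hr0.le))
    have := hlip.dist_le_mul w hwt x hxt
    rw [dist_eq_norm] at this
    refine this.trans ?_
    have : dist w x ≤ ‖v‖ := hseg hw
    exact mul_le_mul_of_nonneg_left this K.coe_nonneg
  have hmv := Convex.norm_image_sub_le_of_norm_hasFDerivWithin_le' hder hbound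
    (convex_segment x u) (left_mem_segment ℝ x u) (right_mem_segment ℝ x u)
  have hux : u - x = v := by simp [hu]
  rw [hux] at hmv
  calc ‖f (x + v) - f x - fderiv ℝ f x v‖ ≤ (K : ℝ) * ‖v‖ * ‖v‖ := hmv
    _ = K * ‖v‖ ^ 2 := by ring

lemma taylorTwoAux {Ω : Set E} (hΩ : IsOpen Ω) {x : E} (hx : x ∈ Ω) {f : E → F}
    (hf : ContDiffOn ℝ 3 f Ω) :
    ∃ r > 0, closedBall x r ⊆ Ω ∧ ∃ C, 0 ≤ C ∧ ∀ v : E, ‖v‖ ≤ r →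
      ‖f (x + v) - f x - fderiv ℝ f x v - (1/2 : ℝ) • fderiv ℝ (fderiv ℝ f) x v v‖
        ≤ C * ‖v‖ ^ 3 := by
  have hf' : ContDiffOn ℝ 2 (fderiv ℝ f) Ω := hf.fderiv_of_isOpen hΩ (by norm_num)
  obtain ⟨r, hr0, hsub, K, hK0, hA⟩ := taylorOneAux hΩ hx hf'
  set B := fderiv ℝ (fderiv ℝ f) x with hB
  have hsym : ∀ a b : E, B a b = B b a := fun a b =>
    ((hf.contDiffAt (hΩ.mem_nhds hx)).isSymmSndFDerivAt (by norm_num)).eq a b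
  set g : E → F := fun w => f w - fderiv ℝ f x (w - x) - (1/2 : ℝ) • B (w - x) (w - x) with hg
  have hgderiv : ∀ w ∈ Ω, HasFDerivAt g (fderiv ℝ f w - fderiv ℝ f x - B (w - x)) w := by
    intro w hw
    have h1 : HasFDerivAt f (fderiv ℝ f w) w :=
      ((hf.contDiffAt (hΩ.mem_nhds hw)).differentiableAt (by norm_num)).hasFDerivAt
    have h2 : HasFDerivAt (fun w : E => fderiv ℝ f x (w - x)) (fderiv ℝ f x) w := by
      have h2' := (fderiv ℝ f x).hasFDerivAt.comp w ((hasFDerivAt_id w).sub_const x)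
      rwa [ContinuousLinearMap.comp_id] at h2'
    have hb : IsBoundedBilinearMap ℝ (fun p : E × E => B p.1 p.2) := B.isBoundedBilinearMap
    have hdiag : HasFDerivAt (fun w : E => (w - x, w - x))
        ((ContinuousLinearMap.id ℝ E).prod (ContinuousLinearMap.id ℝ E)) w :=
      HasFDerivAt.prodMk ((hasFDerivAt_id w).sub_const x) ((hasFDerivAt_id w).sub_const x)
    have h3' : HasFDerivAt (fun w : E => B (w - x) (w - x))
        ((hb.deriv (w - x, w - x)).comp
          ((ContinuousLinearMap.id ℝ E).prod (ContinuousLinearMap.id ℝ E))) w :=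
      by have := (hb.hasFDerivAt (w - x, w - x)).comp w hdiag; exact this
    have h3 : HasFDerivAt (fun w : E => (1/2 : ℝ) • B (w - x) (w - x))
        ((1/2 : ℝ) • ((hb.deriv (w - x, w - x)).comp
          ((ContinuousLinearMap.id ℝ E).prod (ContinuousLinearMap.id ℝ E)))) w :=
      h3'.const_smul (1/2 : ℝ)
    have heq : (1/2 : ℝ) • ((hb.deriv (w - x, w - x)).comp
        ((ContinuousLinearMap.id ℝ E).prod (ContinuousLinearMap.id ℝ E))) = B (w - x) := by
      ext v
      simp only [ContinuousLinearMap.smul_apply, ContinuousLinearMap.coe_comp', Function.comp,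
        ContinuousLinearMap.prod_apply, ContinuousLinearMap.coe_id', id_eq,
        IsBoundedBilinearMap.deriv_apply]
      rw [hsym v (w - x), ← two_smul ℝ (B (w - x) v), smul_smul]
      norm_num
    rw [heq] at h3
    exact (h1.sub h2).sub h3
  refine ⟨r, hr0, hsub, K, hK0, fun v hv => ?_⟩
  set u := x + v with hu
  have huball : u ∈ closedBall x ‖v‖ := by simp [hu, mem_closedBall, dist_eq_norm]
  have hseg : segment ℝ x u ⊆ closedBall x ‖v‖ :=
    (convex_closedBall x ‖v‖).segment_subset (mem_closedBall_self (norm_nonneg v)) huball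
  have hsegr : segment ℝ x u ⊆ closedBall x r := hseg.trans (closedBall_subset_closedBall hv)
  have hder : ∀ w ∈ segment ℝ x u,
      HasFDerivWithinAt g (fderiv ℝ f w - fderiv ℝ f x - B (w - x)) (segment ℝ x u) w :=
    fun w hw => (hgderiv w (hsub (hsegr hw))).hasFDerivWithinAt
  have hbound : ∀ w ∈ segment ℝ x u,
      ‖fderiv ℝ f w - fderiv ℝ f x - B (w - x)‖ ≤ K * ‖v‖ ^ 2 := by
    intro w hw
    have h1 : ‖w - x‖ ≤ ‖v‖ := by
      have := hseg hw
      rwa [mem_closedBall, dist_eq_norm] at this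
    have h2 : ‖w - x‖ ≤ r := h1.trans hv
    have := hA (w - x) h2
    rw [add_sub_cancel] at this
    refine this.trans ?_
    have := pow_le_pow_left₀ (norm_nonneg _) h1 2
    exact mul_le_mul_of_nonneg_left this hK0
  have hmv := Convex.norm_image_sub_le_of_norm_hasFDerivWithin_le hder hbound
    (convex_segment x u) (left_mem_segment ℝ x u) (right_mem_segment ℝ x u)
  have hgu : g u - g x = f (x + v) - f x - fderiv ℝ f x v - (1/2 : ℝ) • B v v := by
    simp only [hg, hu, add_sub_cancel_left, sub_self, map_zero, smul_zero, sub_zero]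
    abel
  have hux : ‖u - x‖ = ‖v‖ := by simp [hu]
  rw [hgu, hux] at hmv
  calc ‖f (x + v) - f x - fderiv ℝ f x v - (1/2 : ℝ) • B v v‖ ≤ K * ‖v‖ ^ 2 * ‖v‖ := hmv
    _ = K * ‖v‖ ^ 3 := by ring

lemma absMul2Aux {a b A B : ℝ} (ha : |a| ≤ A) (hb : |b| ≤ B) : |a * b| ≤ A * B := by
  rw [abs_mul]
  exact mul_le_mul ha hb (abs_nonneg _) ((abs_nonneg _).trans ha)

lemma absMul3Aux {a b c A B C : ℝ} (ha : |a| ≤ A) (hb : |b| ≤ B) (hc : |c| ≤ C) :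
    |a * b * c| ≤ A * B * C := by
  rw [abs_mul]
  exact mul_le_mul (absMul2Aux ha hb) hc (abs_nonneg _)
    (mul_nonneg ((abs_nonneg _).trans ha) ((abs_nonneg _).trans hb))

lemma normBoundAux {F : Type*} [NormedAddCommGroup F] {a h : F} {t u : ℝ}
    (h1 : ‖a - h‖ ≤ t) (h2 : ‖h‖ ≤ u) : ‖a‖ ≤ t + u := by
  calc ‖a‖ = ‖(a - h) + h‖ := by rw [sub_add_cancel]
    _ ≤ ‖a - h‖ + ‖h‖ := norm_add_le _ _
    _ ≤ t + u := add_le_add h1 h2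

lemma normSubBoundAux {F : Type*} [NormedAddCommGroup F] {a b h : F} {t : ℝ}
    (h1 : ‖a - h‖ ≤ t) (h2 : ‖b - h‖ ≤ t) : ‖a - b‖ ≤ 2 * t := by
  have : a - b = (a - h) - (b - h) := by abel
  rw [this]
  calc ‖(a - h) - (b - h)‖ ≤ ‖a - h‖ + ‖b - h‖ := norm_sub_le _ _
    _ ≤ 2 * t := by linarith

lemma halfBilinAux {E F : Type*} [NormedAddCommGroup E] [NormedSpace ℝ E]
    [NormedAddCommGroup F] [NormedSpace ℝ F] (B : E →L[ℝ] E →L[ℝ] F) (v : E) :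
    ‖(1/2 : ℝ) • (B v) v‖ ≤ ‖B‖ / 2 * ‖v‖ ^ 2 := by
  rw [norm_smul, Real.norm_eq_abs, show |(1/2 : ℝ)| = 1/2 from by norm_num]
  have := B.le_opNorm₂ v v
  nlinarith [norm_nonneg ((B v) v)]

lemma degAux {C D s : ℝ} (hC : 0 ≤ C) (hs0 : 0 ≤ s) (hs1 : s ≤ 1) :
    C * s ^ 3 + D * s ^ 2 ≤ (D + C) * s ^ 2 := by
  nlinarith [mul_nonneg (mul_nonneg hC (sq_nonneg s)) (sub_nonneg.2 hs1)]

lemma qBoundAux {q g C KG s : ℝ} (h1 : |q - g| ≤ C * s ^ 2) (h2 : |g| ≤ KG * s)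
    (hC : 0 ≤ C) (hs0 : 0 ≤ s) (hs1 : s ≤ 1) : |q| ≤ (KG + C) * s := by
  have h3 : |q| ≤ |q - g| + |g| := by
    calc |q| = |(q - g) + g| := by ring_nf
      _ ≤ |q - g| + |g| := abs_add_le _ _
  nlinarith [mul_nonneg (mul_nonneg hC hs0) (sub_nonneg.2 hs1)]

lemma qSumAux {a b g t : ℝ} (h1 : |a - g| ≤ t) (h2 : |b + g| ≤ t) : |a + b| ≤ 2 * t := by
  have h0 : a + b = (a - g) + (b + g) := by ring
  rw [h0]
  calc |(a - g) + (b + g)| ≤ |a - g| + |b + g| := abs_add_le _ _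
    _ ≤ 2 * t := by linarith

lemma scalarKeyAux {Api Apj Ami Amj Pp Pm p ai aj ci cj ei ej s KJ K1 K2 C1 C2 : ℝ}
    (hs0 : 0 ≤ s) (hs1 : s ≤ 1) (hK2 : 0 ≤ K2)
    (hApi : Api = ai + ci) (hApj : Apj = aj + cj)
    (hAmi : Ami = -ai + ei) (hAmj : Amj = -aj + ej)
    (hai : |ai| ≤ KJ * s) (haj : |aj| ≤ KJ * s)
    (hci : |ci| ≤ K1 * s ^ 2) (hcj : |cj| ≤ K1 * s ^ 2)
    (hei : |ei| ≤ K1 * s ^ 2) (hej : |ej| ≤ K1 * s ^ 2)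
    (hcei : |ci - ei| ≤ 2 * C1 * s ^ 3) (hcej : |cj - ej| ≤ 2 * C1 * s ^ 3)
    (hqp : |Pp - p| ≤ K2 * s) (hqm : |Pm - p| ≤ K2 * s)
    (hqs : |(Pp - p) + (Pm - p)| ≤ 2 * C2 * s ^ 2) :
    |Api * Apj * Pp + Ami * Amj * Pm - 2 * p * (ai * aj)|
      ≤ (2 * C2 * KJ ^ 2 + 2 * KJ * (2 * C1 * (|p| + K2) + 2 * K2 * K1)
          + 2 * (|p| + K2) * K1 ^ 2) * s ^ 4 := by
  set MP : ℝ := |p| + K2 with hMP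
  have hPpb : |Pp| ≤ MP := by
    have h1 : |Pp| ≤ |p| + |Pp - p| := by
      calc |Pp| = |p + (Pp - p)| := by ring_nf
        _ ≤ |p| + |Pp - p| := abs_add_le _ _
    have h2 : K2 * s ≤ K2 := by nlinarith
    rw [hMP]; linarith
  have hPmb : |Pm| ≤ MP := by
    have h1 : |Pm| ≤ |p| + |Pm - p| := by
      calc |Pm| = |p + (Pm - p)| := by ring_nf
        _ ≤ |p| + |Pm - p| := abs_add_le _ _
    have h2 : K2 * s ≤ K2 := by nlinarith
    rw [hMP]; linarith
  have hPd : |Pp - Pm| ≤ 2 * K2 * s := by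
    have h1 : Pp - Pm = (Pp - p) - (Pm - p) := by ring
    rw [h1]
    calc |(Pp - p) - (Pm - p)| ≤ |Pp - p| + |Pm - p| := abs_sub _ _
      _ ≤ 2 * K2 * s := by linarith
  have hiden : Api * Apj * Pp + Ami * Amj * Pm - 2 * p * (ai * aj)
      = ai * aj * ((Pp - p) + (Pm - p))
        + ai * (Pp * (cj - ej) + (Pp - Pm) * ej)
        + (Pp * (ci - ei) + (Pp - Pm) * ei) * aj
        + Pp * (ci * cj) + Pm * (ei * ej) := by
    rw [hApi, hApj, hAmi, hAmj]
    ring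
  rw [hiden]
  have hb1 : |ai * aj * ((Pp - p) + (Pm - p))| ≤ (KJ * s) * (KJ * s) * (2 * C2 * s ^ 2) :=
    absMul3Aux hai haj hqs
  have hX2 : |Pp * (cj - ej) + (Pp - Pm) * ej|
      ≤ MP * (2 * C1 * s ^ 3) + (2 * K2 * s) * (K1 * s ^ 2) :=
    (abs_add_le _ _).trans (add_le_add (absMul2Aux hPpb hcej) (absMul2Aux hPd hej))
  have hb2 : |ai * (Pp * (cj - ej) + (Pp - Pm) * ej)|
      ≤ (KJ * s) * (MP * (2 * C1 * s ^ 3) + (2 * K2 * s) * (K1 * s ^ 2)) :=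
    absMul2Aux hai hX2
  have hX3 : |Pp * (ci - ei) + (Pp - Pm) * ei|
      ≤ MP * (2 * C1 * s ^ 3) + (2 * K2 * s) * (K1 * s ^ 2) :=
    (abs_add_le _ _).trans (add_le_add (absMul2Aux hPpb hcei) (absMul2Aux hPd hei))
  have hb3 : |(Pp * (ci - ei) + (Pp - Pm) * ei) * aj|
      ≤ (MP * (2 * C1 * s ^ 3) + (2 * K2 * s) * (K1 * s ^ 2)) * (KJ * s) :=
    absMul2Aux hX3 haj
  have hb4 : |Pp * (ci * cj)| ≤ MP * ((K1 * s ^ 2) * (K1 * s ^ 2)) :=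
    absMul2Aux hPpb (absMul2Aux hci hcj)
  have hb5 : |Pm * (ei * ej)| ≤ MP * ((K1 * s ^ 2) * (K1 * s ^ 2)) :=
    absMul2Aux hPmb (absMul2Aux hei hej)
  have e1 := abs_add_le (ai * aj * ((Pp - p) + (Pm - p))
      + ai * (Pp * (cj - ej) + (Pp - Pm) * ej)
      + (Pp * (ci - ei) + (Pp - Pm) * ei) * aj + Pp * (ci * cj)) (Pm * (ei * ej))
  have e2 := abs_add_le (ai * aj * ((Pp - p) + (Pm - p))
      + ai * (Pp * (cj - ej) + (Pp - Pm) * ej)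
      + (Pp * (ci - ei) + (Pp - Pm) * ei) * aj) (Pp * (ci * cj))
  have e3 := abs_add_le (ai * aj * ((Pp - p) + (Pm - p))
      + ai * (Pp * (cj - ej) + (Pp - Pm) * ej)) ((Pp * (ci - ei) + (Pp - Pm) * ei) * aj)
  have e4 := abs_add_le (ai * aj * ((Pp - p) + (Pm - p)))
      (ai * (Pp * (cj - ej) + (Pp - Pm) * ej))
  have hring : (KJ * s) * (KJ * s) * (2 * C2 * s ^ 2)
      + (KJ * s) * (MP * (2 * C1 * s ^ 3) + (2 * K2 * s) * (K1 * s ^ 2))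
      + (MP * (2 * C1 * s ^ 3) + (2 * K2 * s) * (K1 * s ^ 2)) * (KJ * s)
      + MP * ((K1 * s ^ 2) * (K1 * s ^ 2)) + MP * ((K1 * s ^ 2) * (K1 * s ^ 2))
      = (2 * C2 * KJ ^ 2 + 2 * KJ * (2 * C1 * MP + 2 * K2 * K1) + 2 * MP * K1 ^ 2) * s ^ 4 := by
    ring
  rw [hMP] at hring
  linarith [hring]

lemma coordSplitAux {d : ℕ} (w z : EucAux d) (k : Fin d) : w k = z k + (w - z) k := by
  simp [PiLp.sub_apply]

lemma coordSplitNegAux {d : ℕ} (w z : EucAux d) (k : Fin d) : w k = -(z k) + (w + z) k := by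
  simp [PiLp.add_apply]

set_option maxHeartbeats 1000000 in
lemma pointwiseKeyAux {d : ℕ} {Ω : Set (EucAux d)} (hΩ : IsOpen Ω) {x : EucAux d} (hx : x ∈ Ω)
    {Φ : EucAux d → EucAux d} (hΦ : ContDiffOn ℝ 3 Φ Ω) {P : EucAux d → ℝ}
    (hP : ContDiffOn ℝ 2 P Ω) (i j : Fin d) :
    ∃ r > 0, r ≤ 1 ∧ closedBall x r ⊆ Ω ∧ ∃ C, 0 ≤ C ∧ ∀ v : EucAux d, ‖v‖ ≤ r →
      |(Φ (x + v) - Φ x) i * (Φ (x + v) - Φ x) j * P (x + v)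
        + (Φ (x - v) - Φ x) i * (Φ (x - v) - Φ x) j * P (x - v)
        - 2 * P x * ((fderiv ℝ Φ x v) i * (fderiv ℝ Φ x v) j)| ≤ C * ‖v‖ ^ 4
      ∧ |P (x + v) + P (x - v) - 2 * P x| ≤ C * ‖v‖ ^ 2 := by
  obtain ⟨r1, hr1, hsub1, C1, hC1, hT1⟩ := taylorTwoAux hΩ hx hΦ
  obtain ⟨r2, hr2, hsub2, C2, hC2, hT2⟩ := taylorOneAux hΩ hx hP
  set J := fderiv ℝ Φ x with hJdef
  set B := fderiv ℝ (fderiv ℝ Φ) x with hBdef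
  set G := fderiv ℝ P x with hGdef
  have hK10 : (0:ℝ) ≤ ‖B‖ / 2 + C1 := by
    have := norm_nonneg B; linarith
  have hK20 : (0:ℝ) ≤ ‖G‖ + C2 := by
    have := norm_nonneg G; linarith
  have hKJ0 : (0:ℝ) ≤ ‖J‖ := norm_nonneg _
  have hCb0 : (0:ℝ) ≤ 2 * C2 * ‖J‖ ^ 2
      + 2 * ‖J‖ * (2 * C1 * (|P x| + (‖G‖ + C2)) + 2 * (‖G‖ + C2) * (‖B‖ / 2 + C1))
      + 2 * (|P x| + (‖G‖ + C2)) * (‖B‖ / 2 + C1) ^ 2 := by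
    have hMP0 : (0:ℝ) ≤ |P x| + (‖G‖ + C2) := by
      have := abs_nonneg (P x); linarith
    have h1 : (0:ℝ) ≤ 2 * C2 * ‖J‖ ^ 2 := mul_nonneg (by linarith) (sq_nonneg _)
    have h2 : (0:ℝ) ≤ 2 * C1 * (|P x| + (‖G‖ + C2)) :=
      mul_nonneg (by linarith) hMP0
    have h3 : (0:ℝ) ≤ 2 * (‖G‖ + C2) * (‖B‖ / 2 + C1) := mul_nonneg (by linarith) hK10
    have h4 : (0:ℝ) ≤ 2 * ‖J‖ * (2 * C1 * (|P x| + (‖G‖ + C2))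
        + 2 * (‖G‖ + C2) * (‖B‖ / 2 + C1)) := mul_nonneg (by linarith) (by linarith)
    have h5 : (0:ℝ) ≤ 2 * (|P x| + (‖G‖ + C2)) * (‖B‖ / 2 + C1) ^ 2 :=
      mul_nonneg (by linarith) (sq_nonneg _)
    linarith
  refine ⟨min r1 (min r2 1), by positivity, min_le_of_right_le (min_le_right _ _),
    (closedBall_subset_closedBall (min_le_left _ _)).trans hsub1,
    2 * C2 * ‖J‖ ^ 2
      + 2 * ‖J‖ * (2 * C1 * (|P x| + (‖G‖ + C2)) + 2 * (‖G‖ + C2) * (‖B‖ / 2 + C1))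
      + 2 * (|P x| + (‖G‖ + C2)) * (‖B‖ / 2 + C1) ^ 2 + 2 * C2, by linarith,
    fun v hv => ?_⟩
  have hv1 : ‖v‖ ≤ r1 := hv.trans (min_le_left _ _)
  have hv2 : ‖v‖ ≤ r2 := hv.trans (min_le_of_right_le (min_le_left _ _))
  have hvone : ‖v‖ ≤ 1 := hv.trans (min_le_of_right_le (min_le_right _ _))
  have hv0 : 0 ≤ ‖v‖ := norm_nonneg v
  have hTp := hT1 v hv1
  have hTm := hT1 (-v) (by rwa [norm_neg])
  simp only [← sub_eq_add_neg, map_neg, ContinuousLinearMap.neg_apply, neg_neg,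
    sub_neg_eq_add, norm_neg] at hTm
  have hPp := hT2 v hv2
  have hPm := hT2 (-v) (by rwa [norm_neg])
  simp only [← sub_eq_add_neg, map_neg, sub_neg_eq_add, norm_neg] at hPm
  rw [Real.norm_eq_abs] at hPp hPm
  have hBvv := halfBilinAux B v
  have hcn : ‖Φ (x + v) - Φ x - J v‖ ≤ C1 * ‖v‖ ^ 3 + ‖B‖ / 2 * ‖v‖ ^ 2 :=
    normBoundAux hTp hBvv
  have hen : ‖Φ (x - v) - Φ x + J v‖ ≤ C1 * ‖v‖ ^ 3 + ‖B‖ / 2 * ‖v‖ ^ 2 :=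
    normBoundAux hTm hBvv
  have hce : ‖(Φ (x + v) - Φ x - J v) - (Φ (x - v) - Φ x + J v)‖ ≤ 2 * (C1 * ‖v‖ ^ 3) :=
    normSubBoundAux hTp hTm
  have hdeg : C1 * ‖v‖ ^ 3 + ‖B‖ / 2 * ‖v‖ ^ 2 ≤ (‖B‖ / 2 + C1) * ‖v‖ ^ 2 :=
    degAux hC1 hv0 hvone
  have hGv : |G v| ≤ ‖G‖ * ‖v‖ := by
    rw [← Real.norm_eq_abs]; exact G.le_opNorm v
  have hqpb : |P (x + v) - P x| ≤ (‖G‖ + C2) * ‖v‖ := qBoundAux hPp hGv hC2 hv0 hvone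
  have hqmb : |P (x - v) - P x| ≤ (‖G‖ + C2) * ‖v‖ := by
    refine qBoundAux (g := -(G v)) ?_ (by rwa [abs_neg]) hC2 hv0 hvone
    rwa [sub_neg_eq_add]
  have hqs : |(P (x + v) - P x) + (P (x - v) - P x)| ≤ 2 * (C2 * ‖v‖ ^ 2) :=
    qSumAux hPp hPm
  constructor
  · have hmain := scalarKeyAux (s := ‖v‖) (KJ := ‖J‖) (K1 := ‖B‖ / 2 + C1)
      (K2 := ‖G‖ + C2) (C1 := C1) (C2 := C2) (p := P x)
      hv0 hvone hK20
      (coordSplitAux (Φ (x + v) - Φ x) (J v) i)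
      (coordSplitAux (Φ (x + v) - Φ x) (J v) j)
      (coordSplitNegAux (Φ (x - v) - Φ x) (J v) i)
      (coordSplitNegAux (Φ (x - v) - Φ x) (J v) j)
      ((absCoordLeAux (J v) i).trans (J.le_opNorm v))
      ((absCoordLeAux (J v) j).trans (J.le_opNorm v))
      ((absCoordLeAux _ i).trans (hcn.trans hdeg))
      ((absCoordLeAux _ j).trans (hcn.trans hdeg))
      ((absCoordLeAux _ i).trans (hen.trans hdeg))
      ((absCoordLeAux _ j).trans (hen.trans hdeg))
      (by
        rw [show (Φ (x + v) - Φ x - J v) i - (Φ (x - v) - Φ x + J v) i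
            = ((Φ (x + v) - Φ x - J v) - (Φ (x - v) - Φ x + J v)) i from by
          simp [PiLp.sub_apply]]
        refine (absCoordLeAux _ i).trans (hce.trans (le_of_eq (by ring))))
      (by
        rw [show (Φ (x + v) - Φ x - J v) j - (Φ (x - v) - Φ x + J v) j
            = ((Φ (x + v) - Φ x - J v) - (Φ (x - v) - Φ x + J v)) j from by
          simp [PiLp.sub_apply]]
        refine (absCoordLeAux _ j).trans (hce.trans (le_of_eq (by ring))))
      hqpb hqmb (hqs.trans (le_of_eq (by ring)))
    refine hmain.trans ?_
    have h0 : (0:ℝ) ≤ 2 * C2 * ‖v‖ ^ 4 :=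
      mul_nonneg (by linarith) (pow_nonneg hv0 4)
    nlinarith [pow_nonneg hv0 4]
  · have h1 : P (x + v) + P (x - v) - 2 * P x
        = (P (x + v) - P x) + (P (x - v) - P x) := by ring
    rw [h1]
    refine (hqs.trans ?_)
    have h2 : (0:ℝ) ≤ ‖v‖ ^ 2 := sq_nonneg _
    nlinarith [mul_nonneg hCb0 h2]


/-- The Jacobian matrix `DΦ(x)` of `Φ : ℝ^d → ℝ^d` at `x`. -/
noncomputable def jacobianMatrix {d : ℕ}
    (Φ : EuclideanSpace ℝ (Fin d) → EuclideanSpace ℝ (Fin d))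
    (x : EuclideanSpace ℝ (Fin d)) : Matrix (Fin d) (Fin d) ℝ :=
  Matrix.of fun i j => fderiv ℝ Φ x (EuclideanSpace.single j 1) i

set_option maxHeartbeats 2000000 in
/-- As `ε → 0⁺`, the normalized local covariance matrix satisfies
`[∫_{B_ε(x)} (Φ(u) − Φ(x))(Φ(u) − Φ(x))ᵀ P(u) du] / (ε² ∫_{B_ε(x)} P(u) du)
  = (1/(d+2))·DΦ(x)·DΦ(x)ᵀ + O(ε²)` (entrywise). -/
theorem normalized_local_covariance_matrix_expansion_flat
    (d : ℕ) (hd : 1 ≤ d) (Ω : Set (EuclideanSpace ℝ (Fin d))) (hΩ : IsOpen Ω)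
    (x : EuclideanSpace ℝ (Fin d)) (hx : x ∈ Ω)
    (Φ : EuclideanSpace ℝ (Fin d) → EuclideanSpace ℝ (Fin d))
    (hΦ : ContDiffOn ℝ 3 Φ Ω)
    (P : EuclideanSpace ℝ (Fin d) → ℝ) (hP : ContDiffOn ℝ 2 P Ω)
    (hPx : 0 < P x) (hPnn : ∀ u ∈ Ω, 0 ≤ P u) :
    ∀ i j : Fin d,
      (fun ε : ℝ =>
          (∫ u in closedBall x ε, (Φ u - Φ x) i * (Φ u - Φ x) j * P u) /
              (ε ^ 2 * ∫ u in closedBall x ε, P u)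
            - (1 / (d + 2)) * (jacobianMatrix Φ x * (jacobianMatrix Φ x)ᵀ) i j)
        =O[𝓝[>] (0 : ℝ)] fun ε => ε ^ 2 := by
  intro i j
  haveI : Nonempty (Fin d) := ⟨⟨0, hd⟩⟩
  obtain ⟨r, hr, hrone, hsubΩ, C, hC0, hkey⟩ := pointwiseKeyAux hΩ hx hΦ hP i j
  set J := fderiv ℝ Φ x with hJdef
  set ω := (volume (closedBall (0 : EucAux d) 1)).toReal with hωdef
  have hω : 0 < ω := ENNReal.toReal_pos
    (measure_closedBall_pos volume _ one_pos).ne' measure_closedBall_lt_top.ne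
  set p := P x with hpdef
  have hp : 0 < p := hPx
  set A : ℝ := (jacobianMatrix Φ x * (jacobianMatrix Φ x)ᵀ) i j with hAdef
  have hSA : (∑ k, (J (EuclideanSpace.single k 1)) i * (J (EuclideanSpace.single k 1)) j)
      = A := by
    rw [hAdef, Matrix.mul_apply]
    apply Finset.sum_congr rfl
    intro k _
    rw [Matrix.transpose_apply, hJdef]
    rfl
  have hd2 : (0:ℝ) < (d:ℝ) + 2 := by positivity
  set CC : ℝ := (((d:ℝ) + 2) * (C * ω) + |A| * (C * ω)) / 2 with hCC
  set DD : ℝ := p / 2 * ω * ((d:ℝ) + 2) with hDD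
  have hCC0 : 0 ≤ CC := by
    rw [hCC]
    have h1 : (0:ℝ) ≤ ((d:ℝ) + 2) * (C * ω) := mul_nonneg hd2.le (mul_nonneg hC0 hω.le)
    have h2 : (0:ℝ) ≤ |A| * (C * ω) := mul_nonneg (abs_nonneg _) (mul_nonneg hC0 hω.le)
    linarith
  have hDD0 : 0 < DD := by
    rw [hDD]
    exact mul_pos (mul_pos (half_pos hp) hω) hd2
  set ε₀ := min r (Real.sqrt (p / (2 * C + 2))) with hε₀
  have hε₀pos : 0 < ε₀ := lt_min hr (Real.sqrt_pos.2 (by positivity))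
  rw [Asymptotics.isBigO_iff]
  refine ⟨CC / DD, ?_⟩
  filter_upwards [Ioo_mem_nhdsGT hε₀pos] with ε hεmem
  obtain ⟨hε0, hεlt⟩ := hεmem
  have hε0' : 0 ≤ ε := hε0.le
  have hεr : ε ≤ r := hεlt.le.trans (min_le_left _ _)
  have hεs : ε ≤ Real.sqrt (p / (2 * C + 2)) := hεlt.le.trans (min_le_right _ _)
  have hε2 : (0:ℝ) < ε ^ 2 := by positivity
  -- continuity and integrability
  have hΦc : ContinuousOn Φ Ω := hΦ.continuousOn
  have hPc : ContinuousOn P Ω := hP.continuousOn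
  have hFc : ContinuousOn (fun u => (Φ u - Φ x) i * (Φ u - Φ x) j * P u) Ω :=
    (((contCoordAux i).comp_continuousOn (hΦc.sub continuousOn_const)).mul
      ((contCoordAux j).comp_continuousOn (hΦc.sub continuousOn_const))).mul hPc
  have hmapsp : Set.MapsTo (fun v : EucAux d => x + v) (closedBall 0 ε) Ω := by
    intro v hv
    apply hsubΩ
    rw [mem_closedBall] at hv ⊢
    rw [dist_zero_right] at hv
    calc dist (x + v) x = ‖v‖ := by rw [dist_eq_norm]; simp
      _ ≤ ε := hv
      _ ≤ r := hεr
  have hmapsm : Set.MapsTo (fun v : EucAux d => x - v) (closedBall 0 ε) Ω := by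
    intro v hv
    apply hsubΩ
    rw [mem_closedBall] at hv ⊢
    rw [dist_zero_right] at hv
    calc dist (x - v) x = ‖v‖ := by rw [dist_eq_norm]; simp
      _ ≤ ε := hv
      _ ≤ r := hεr
  have hcontp : ContinuousOn (fun v : EucAux d => x + v) (closedBall 0 ε) :=
    (continuous_const.add continuous_id).continuousOn
  have hcontm : ContinuousOn (fun v : EucAux d => x - v) (closedBall 0 ε) :=
    (continuous_const.sub continuous_id).continuousOn
  have hintFp : IntegrableOn
      (fun v : EucAux d => (Φ (x + v) - Φ x) i * (Φ (x + v) - Φ x) j * P (x + v))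
      (closedBall 0 ε) volume :=
    (hFc.comp hcontp hmapsp).integrableOn_compact (isCompact_closedBall _ _)
  have hintFm : IntegrableOn
      (fun v : EucAux d => (Φ (x - v) - Φ x) i * (Φ (x - v) - Φ x) j * P (x - v))
      (closedBall 0 ε) volume :=
    (hFc.comp hcontm hmapsm).integrableOn_compact (isCompact_closedBall _ _)
  have hintPp : IntegrableOn (fun v : EucAux d => P (x + v)) (closedBall 0 ε) volume :=
    (hPc.comp hcontp hmapsp).integrableOn_compact (isCompact_closedBall _ _)
  have hintPm : IntegrableOn (fun v : EucAux d => P (x - v)) (closedBall 0 ε) volume :=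
    (hPc.comp hcontm hmapsm).integrableOn_compact (isCompact_closedBall _ _)
  have hintG : IntegrableOn (fun v : EucAux d => 2 * p * ((J v) i * (J v) j))
      (closedBall 0 ε) volume :=
    ((continuous_const.mul (((contCoordAux i).comp J.continuous).mul
      ((contCoordAux j).comp J.continuous))).continuousOn).integrableOn_compact
      (isCompact_closedBall _ _)
  have hvnorm : ∀ v ∈ closedBall (0 : EucAux d) ε, ‖v‖ ≤ ε := by
    intro v hv
    rwa [mem_closedBall, dist_zero_right] at hv
  -- numerator
  have hN1 : (∫ u in closedBall x ε, (Φ u - Φ x) i * (Φ u - Φ x) j * P u)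
      = ∫ v in closedBall (0 : EucAux d) ε,
          (Φ (x + v) - Φ x) i * (Φ (x + v) - Φ x) j * P (x + v) :=
    setIntegralTranslateAux x ε _
  have hneg : (∫ v in closedBall (0 : EucAux d) ε,
        (Φ (x - v) - Φ x) i * (Φ (x - v) - Φ x) j * P (x - v))
      = ∫ v in closedBall (0 : EucAux d) ε,
          (Φ (x + v) - Φ x) i * (Φ (x + v) - Φ x) j * P (x + v) := by
    rw [← setIntegralCompIsometryAux (LinearIsometryEquiv.neg ℝ (E := EucAux d))
      (fun v => (Φ (x + v) - Φ x) i * (Φ (x + v) - Φ x) j * P (x + v)) ε]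
    apply setIntegral_congr_fun measurableSet_closedBall
    intro v _
    simp [LinearIsometryEquiv.coe_neg, sub_eq_add_neg]
  have hPneg : (∫ v in closedBall (0 : EucAux d) ε, P (x - v))
      = ∫ v in closedBall (0 : EucAux d) ε, P (x + v) := by
    rw [← setIntegralCompIsometryAux (LinearIsometryEquiv.neg ℝ (E := EucAux d))
      (fun v => P (x + v)) ε]
    apply setIntegral_congr_fun measurableSet_closedBall
    intro v _
    simp [LinearIsometryEquiv.coe_neg, sub_eq_add_neg]
  have hvol : (volume (closedBall (0 : EucAux d) ε)).toReal = ω * ε ^ d := by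
    rw [volClosedBallAux hε0' 0, ← hωdef]
  have hintFsum : IntegrableOn
      (fun v : EucAux d => (Φ (x + v) - Φ x) i * (Φ (x + v) - Φ x) j * P (x + v)
        + (Φ (x - v) - Φ x) i * (Φ (x - v) - Φ x) j * P (x - v)) (closedBall 0 ε) volume :=
    hintFp.add hintFm
  have hNsum : (∫ v in closedBall (0 : EucAux d) ε,
        ((Φ (x + v) - Φ x) i * (Φ (x + v) - Φ x) j * P (x + v)
          + (Φ (x - v) - Φ x) i * (Φ (x - v) - Φ x) j * P (x - v)
          - 2 * p * ((J v) i * (J v) j)))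
      = 2 * (∫ u in closedBall x ε, (Φ u - Φ x) i * (Φ u - Φ x) j * P u)
        - 2 * p * (A * (ω * ε ^ (d + 2) / ((d:ℝ) + 2))) := by
    rw [integral_sub hintFsum hintG, integral_add hintFp hintFm, hneg, ← hN1,
      integral_const_mul, integralJacAux hd hε0' J i j, hSA, ← hωdef]
    ring
  have h2N : |2 * (∫ u in closedBall x ε, (Φ u - Φ x) i * (Φ u - Φ x) j * P u)
        - 2 * p * (A * (ω * ε ^ (d + 2) / ((d:ℝ) + 2)))|
      ≤ C * (ε ^ 2 * ε ^ 2) * (ω * ε ^ d) := by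
    rw [← hNsum, ← Real.norm_eq_abs, ← hvol]
    apply norm_setIntegral_le_of_norm_le_const measure_closedBall_lt_top
    · intro v hv
      have hvε : ‖v‖ ≤ ε := hvnorm v hv
      have hvr : ‖v‖ ≤ r := hvε.trans hεr
      rw [Real.norm_eq_abs]
      refine ((hkey v hvr).1).trans ?_
      calc C * ‖v‖ ^ 4 ≤ C * ε ^ 4 :=
            mul_le_mul_of_nonneg_left (pow_le_pow_left₀ (norm_nonneg v) hvε 4) hC0
        _ = C * (ε ^ 2 * ε ^ 2) := by ring
  -- denominator
  have hD1 : (∫ u in closedBall x ε, P u)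
      = ∫ v in closedBall (0 : EucAux d) ε, P (x + v) := setIntegralTranslateAux x ε _
  have hintc : IntegrableOn (fun _ : EucAux d => 2 * p) (closedBall 0 ε) volume :=
    integrableOn_const measure_closedBall_lt_top.ne
  have hintPsum : IntegrableOn (fun v : EucAux d => P (x + v) + P (x - v))
      (closedBall 0 ε) volume := hintPp.add hintPm
  have hDsum : (∫ v in closedBall (0 : EucAux d) ε, (P (x + v) + P (x - v) - 2 * p))
      = 2 * (∫ u in closedBall x ε, P u) - 2 * p * (ω * ε ^ d) := by
    rw [integral_sub hintPsum hintc, integral_add hintPp hintPm, hPneg, ← hD1,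
      setIntegral_const, smul_eq_mul, measureReal_def, hvol]
    ring
  have h2D : |2 * (∫ u in closedBall x ε, P u) - 2 * p * (ω * ε ^ d)|
      ≤ C * ε ^ 2 * (ω * ε ^ d) := by
    rw [← hDsum, ← Real.norm_eq_abs, ← hvol]
    apply norm_setIntegral_le_of_norm_le_const measure_closedBall_lt_top
    · intro v hv
      have hvε : ‖v‖ ≤ ε := hvnorm v hv
      have hvr : ‖v‖ ≤ r := hvε.trans hεr
      rw [Real.norm_eq_abs]
      refine ((hkey v hvr).2).trans ?_
      exact mul_le_mul_of_nonneg_left (pow_le_pow_left₀ (norm_nonneg v) hvε 2) hC0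
  -- lower bound for the denominator
  have hεsq : ε ^ 2 * (2 * C + 2) ≤ p := by
    have h1 : ε ^ 2 ≤ p / (2 * C + 2) := by
      calc ε ^ 2 ≤ Real.sqrt (p / (2 * C + 2)) ^ 2 := pow_le_pow_left₀ hε0' hεs 2
        _ = p / (2 * C + 2) := Real.sq_sqrt (by positivity)
    rwa [← le_div_iff₀ (by positivity)]
  have hCe2 : C * ε ^ 2 ≤ p / 2 := by nlinarith [sq_nonneg ε]
  have hW : (0:ℝ) < ω * ε ^ d := mul_pos hω (pow_pos hε0 d)
  have hDlow : p / 2 * (ω * ε ^ d) ≤ ∫ u in closedBall x ε, P u := by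
    have h1 := (abs_le.1 h2D).1
    have h2 : C * ε ^ 2 * (ω * ε ^ d) ≤ p / 2 * (ω * ε ^ d) :=
      mul_le_mul_of_nonneg_right hCe2 hW.le
    nlinarith [hW]
  have hDpos : (0:ℝ) < ∫ u in closedBall x ε, P u :=
    lt_of_lt_of_le (mul_pos (half_pos hp) hW) hDlow
  -- final computation
  set N : ℝ := ∫ u in closedBall x ε, (Φ u - Φ x) i * (Φ u - Φ x) j * P u with hNdef
  set D : ℝ := ∫ u in closedBall x ε, P u with hDdef
  have hεd2 : ε ^ (d + 2) = ε ^ d * ε ^ 2 := pow_add ε d 2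
  have hden : (0:ℝ) < ε ^ 2 * D * ((d:ℝ) + 2) := mul_pos (mul_pos hε2 hDpos) hd2
  have hquot : N / (ε ^ 2 * D) - 1 / ((d:ℝ) + 2) * A
      = (N * ((d:ℝ) + 2) - A * (ε ^ 2 * D)) / (ε ^ 2 * D * ((d:ℝ) + 2)) := by
    field_simp
  have hiden2 : 2 * (N * ((d:ℝ) + 2) - A * (ε ^ 2 * D))
      = (2 * N - 2 * p * (A * (ω * ε ^ (d + 2) / ((d:ℝ) + 2)))) * ((d:ℝ) + 2)
        - A * ε ^ 2 * (2 * D - 2 * p * (ω * ε ^ d)) := by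
    rw [hεd2]
    field_simp
    ring
  have hnum : |N * ((d:ℝ) + 2) - A * (ε ^ 2 * D)| ≤ CC * (ε ^ d * ε ^ 2 * ε ^ 2) := by
    have h3 : |2 * (N * ((d:ℝ) + 2) - A * (ε ^ 2 * D))|
        ≤ |(2 * N - 2 * p * (A * (ω * ε ^ (d + 2) / ((d:ℝ) + 2)))) * ((d:ℝ) + 2)|
          + |A * ε ^ 2 * (2 * D - 2 * p * (ω * ε ^ d))| := by
      rw [hiden2]
      exact abs_sub _ _
    have h4 : |(2 * N - 2 * p * (A * (ω * ε ^ (d + 2) / ((d:ℝ) + 2)))) * ((d:ℝ) + 2)|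
        ≤ (C * (ε ^ 2 * ε ^ 2) * (ω * ε ^ d)) * ((d:ℝ) + 2) := by
      rw [abs_mul, abs_of_pos hd2]
      exact mul_le_mul_of_nonneg_right h2N hd2.le
    have h5 : |A * ε ^ 2 * (2 * D - 2 * p * (ω * ε ^ d))|
        ≤ |A| * ε ^ 2 * (C * ε ^ 2 * (ω * ε ^ d)) := by
      rw [abs_mul, abs_mul, abs_of_pos hε2]
      exact mul_le_mul_of_nonneg_left h2D (by positivity)
    have h6 : |2 * (N * ((d:ℝ) + 2) - A * (ε ^ 2 * D))|
        = 2 * |N * ((d:ℝ) + 2) - A * (ε ^ 2 * D)| := by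
      rw [abs_mul]
      norm_num
    have h7 : (C * (ε ^ 2 * ε ^ 2) * (ω * ε ^ d)) * ((d:ℝ) + 2)
        + |A| * ε ^ 2 * (C * ε ^ 2 * (ω * ε ^ d))
        = 2 * (CC * (ε ^ d * ε ^ 2 * ε ^ 2)) := by
      rw [hCC]
      ring
    linarith
  have hdenge : DD * (ε ^ d * ε ^ 2) ≤ ε ^ 2 * D * ((d:ℝ) + 2) := by
    have h1 : ε ^ 2 * (p / 2 * (ω * ε ^ d)) ≤ ε ^ 2 * D :=
      mul_le_mul_of_nonneg_left hDlow hε2.le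
    have h2 : ε ^ 2 * (p / 2 * (ω * ε ^ d)) * ((d:ℝ) + 2) ≤ ε ^ 2 * D * ((d:ℝ) + 2) :=
      mul_le_mul_of_nonneg_right h1 hd2.le
    calc DD * (ε ^ d * ε ^ 2) = ε ^ 2 * (p / 2 * (ω * ε ^ d)) * ((d:ℝ) + 2) := by
          rw [hDD]; ring
      _ ≤ ε ^ 2 * D * ((d:ℝ) + 2) := h2
  have hDDεpos : (0:ℝ) < DD * (ε ^ d * ε ^ 2) :=
    mul_pos hDD0 (mul_pos (pow_pos hε0 d) hε2)
  have hfinal : |N / (ε ^ 2 * D) - 1 / ((d:ℝ) + 2) * A| ≤ CC / DD * ε ^ 2 := by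
    rw [hquot, abs_div, abs_of_pos hden]
    calc |N * ((d:ℝ) + 2) - A * (ε ^ 2 * D)| / (ε ^ 2 * D * ((d:ℝ) + 2))
        ≤ CC * (ε ^ d * ε ^ 2 * ε ^ 2) / (DD * (ε ^ d * ε ^ 2)) :=
          div_le_div₀ (by positivity) hnum hDDεpos hdenge
      _ = CC / DD * ε ^ 2 := by
          field_simp
  rw [Real.norm_eq_abs, Real.norm_eq_abs, abs_of_pos hε2]
  exact hfinal
end

section
/- Let d ≥ 1, let Ω ⊆ ℝ^d be open, let x ∈ Ω, and let f, P : Ω → ℝ be three times continuously differentiable. Then, as h → 0⁺, ∫_{B_h(x)} (f(y) − f(x))·P(y) dy = (|S^{d-1}|/(d(d+2)))·( (1/2)·P(x)·Δf(x) + ⟨∇f(x), ∇P(x)⟩ )·h^{d+2} + O(h^{d+3}). -/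
open Asymptotics Filter Topology MeasureTheory Metric
open scoped RealInnerProductSpace

/-- The surface measure `|S^{d-1}|` of the unit sphere in `ℝ^d`. -/
noncomputable def sphereArea (d : ℕ) : ℝ :=
  (((volume : Measure (EuclideanSpace ℝ (Fin d))).toSphere) Set.univ).toReal

/-- The Euclidean Laplacian `Δf(x) = ∑ i ∂²f/∂x_i²(x)`. -/
noncomputable def laplacian {d : ℕ} (f : EuclideanSpace ℝ (Fin d) → ℝ)
    (x : EuclideanSpace ℝ (Fin d)) : ℝ :=
  ∑ i : Fin d,
    iteratedFDeriv ℝ 2 f x ![EuclideanSpace.single i 1, EuclideanSpace.single i 1]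

section Helpers

variable {E : Type*} [NormedAddCommGroup E] [NormedSpace ℝ E]


lemma taylor_order_two_bound {g : E → ℝ} {x : E} (hg : ContDiffAt ℝ 3 g x) :
    ∃ ε > (0:ℝ), ∃ C : ℝ, 0 ≤ C ∧ ∀ y ∈ closedBall x ε,
      |g y - fderiv ℝ g x (y - x)
        - (1/2) * fderiv ℝ (fderiv ℝ g) x (y - x) (y - x) - g x| ≤ C * ‖y - x‖ ^ 3 := by
  classical
  set D2 := fderiv ℝ (fderiv ℝ g) x with hD2
  -- Lipschitz bound for the second derivative
  have h2 : ContDiffAt ℝ 2 (fderiv ℝ g) x := hg.fderiv_right (by norm_num)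
  have h1 : ContDiffAt ℝ 1 (fderiv ℝ (fderiv ℝ g)) x := h2.fderiv_right (by norm_num)
  obtain ⟨K, t, ht, hlip⟩ := h1.exists_lipschitzOnWith
  -- neighborhood where g is C³
  obtain ⟨u, hu, hgu⟩ := hg.contDiffOn (le_refl _) (by simp)
  obtain ⟨v, hvu, hv, hxv⟩ := _root_.mem_nhds_iff.1 hu
  obtain ⟨ε, hε, hball⟩ := Metric.nhds_basis_closedBall.mem_iff.1 (Filter.inter_mem (hv.mem_nhds hxv) ht)
  have hsub_v : closedBall x ε ⊆ v := fun z hz => (hball hz).1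
  have hsub_t : closedBall x ε ⊆ t := fun z hz => (hball hz).2
  have hCD : ∀ z ∈ closedBall x ε, ContDiffAt ℝ 3 g z := fun z hz =>
    (hgu.mono hvu).contDiffAt (hv.mem_nhds (hsub_v hz))
  refine ⟨ε, hε, K, K.2, fun y hy => ?_⟩
  set r : ℝ := ‖y - x‖ with hr
  have hry : y ∈ closedBall x r := by simp [mem_closedBall, dist_eq_norm, hr]
  have hrε : r ≤ ε := by
    rw [hr, ← dist_eq_norm]; exact mem_closedBall.1 hy
  have hsub : closedBall x r ⊆ closedBall x ε := closedBall_subset_closedBall hrε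
  -- step 1 : bound on S z := fderiv g z - fderiv g x - D2 (z - x)
  set S : E → (E →L[ℝ] ℝ) := fun z => fderiv ℝ g z - fderiv ℝ g x - D2 (z - x) with hS
  have hSbound : ∀ z ∈ closedBall x r, ‖S z‖ ≤ (K * r) * ‖z - x‖ := by
    intro z hz
    have h0 : S x = 0 := by simp [hS]
    have key : ∀ w ∈ closedBall x r, HasFDerivWithinAt S
        (fderiv ℝ (fderiv ℝ g) w - D2) (closedBall x r) w := by
      intro w hw
      have hdiff : HasFDerivAt (fderiv ℝ g) (fderiv ℝ (fderiv ℝ g) w) w := by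
        have := (hCD w (hsub hw)).fderiv_right (m := 2) (by norm_num)
        exact (this.differentiableAt (by norm_num)).hasFDerivAt
      have hlin : HasFDerivAt (fun z : E => D2 (z - x)) D2 w := by
        have h' : HasFDerivAt (fun z : E => z - x) (ContinuousLinearMap.id ℝ E) w :=
          (hasFDerivAt_id w).sub_const x
        have := (D2.hasFDerivAt (x := w - x)).comp w h'
        simpa [Function.comp_def] using this
      exact ((hdiff.sub_const (fderiv ℝ g x)).sub hlin).hasFDerivWithinAt
    have hbd : ∀ w ∈ closedBall x r, ‖fderiv ℝ (fderiv ℝ g) w - D2‖ ≤ K * r := by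
      intro w hw
      have hxt : x ∈ t := mem_of_mem_nhds ht
      have hwt : w ∈ t := hsub_t (hsub hw)
      have hd := hlip.dist_le_mul w hwt x hxt
      rw [dist_eq_norm, dist_eq_norm] at hd
      calc ‖fderiv ℝ (fderiv ℝ g) w - D2‖ ≤ K * ‖w - x‖ := hd
        _ ≤ K * r := by
            have : ‖w - x‖ ≤ r := by rw [← dist_eq_norm]; exact mem_closedBall.1 hw
            exact mul_le_mul_of_nonneg_left this K.2
    have := (convex_closedBall x r).norm_image_sub_le_of_norm_hasFDerivWithin_le key hbd
      (mem_closedBall_self (by positivity)) hz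
    simpa [h0] using this
  -- step 2 : bound on R
  set R : E → ℝ := fun z => g z - fderiv ℝ g x (z - x) - (1/2) * D2 (z - x) (z - x) - g x
    with hRdef
  have hR0 : R x = 0 := by simp [hRdef]
  have hkey : ∀ w ∈ closedBall x r, HasFDerivWithinAt R (S w) (closedBall x r) w := by
    intro w hw
    have hgw : HasFDerivAt g (fderiv ℝ g w) w :=
      ((hCD w (hsub hw)).differentiableAt (by norm_num)).hasFDerivAt
    have hsub' : HasFDerivAt (fun z : E => z - x) (ContinuousLinearMap.id ℝ E) w :=
      (hasFDerivAt_id w).sub_const x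
    have hA : HasFDerivAt (fun z : E => fderiv ℝ g x (z - x)) (fderiv ℝ g x) w := by
      have := ((fderiv ℝ g x).hasFDerivAt (x := w - x)).comp w hsub'
      simpa [Function.comp_def] using this
    -- derivative of the quadratic form
    have hb : IsBoundedBilinearMap ℝ (fun p : E × E => D2 p.1 p.2) := D2.isBoundedBilinearMap
    have hpair : HasFDerivAt (fun z : E => ((z - x, z - x) : E × E))
        ((ContinuousLinearMap.id ℝ E).prod (ContinuousLinearMap.id ℝ E)) w :=
      hsub'.prodMk hsub'
    have hQ : HasFDerivAt (fun z : E => D2 (z - x) (z - x))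
        ((hb.deriv (w - x, w - x)).comp
          ((ContinuousLinearMap.id ℝ E).prod (ContinuousLinearMap.id ℝ E))) w := by
      have := (hb.hasFDerivAt (w - x, w - x)).comp w hpair
      simpa [Function.comp_def] using this
    have hsymm : ∀ v u : E, D2 v u = D2 u v := fun v u =>
      (hg.isSymmSndFDerivAt (by norm_num)) v u
    have htotal := ((hgw.sub hA).sub ((hQ.const_mul ((1:ℝ)/2)))).sub_const (g x)
    refine htotal.hasFDerivWithinAt.congr_fderiv ?_
    ext v
    simp only [hS, ContinuousLinearMap.sub_apply, ContinuousLinearMap.comp_apply,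
      ContinuousLinearMap.prod_apply, ContinuousLinearMap.coe_id', id_eq,
      IsBoundedBilinearMap.deriv_apply, ContinuousLinearMap.smul_apply,
      ContinuousLinearMap.coe_smul', Pi.smul_apply, smul_eq_mul]
    rw [hsymm v (w - x)]
    ring
  have hbd2 : ∀ w ∈ closedBall x r, ‖S w‖ ≤ K * r * r := by
    intro w hw
    calc ‖S w‖ ≤ K * r * ‖w - x‖ := hSbound w hw
      _ ≤ K * r * r := by
          have h1 : ‖w - x‖ ≤ r := by rw [← dist_eq_norm]; exact mem_closedBall.1 hw
          have h2 : (0:ℝ) ≤ K * r := by positivity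
          exact mul_le_mul_of_nonneg_left h1 h2
  have hfin := (convex_closedBall x r).norm_image_sub_le_of_norm_hasFDerivWithin_le hkey hbd2
    (mem_closedBall_self (by positivity)) hry
  rw [hR0, sub_zero] at hfin
  calc |g y - fderiv ℝ g x (y - x) - (1/2) * D2 (y - x) (y - x) - g x|
      = ‖R y‖ := by rw [hRdef]; rfl
    _ ≤ K * r * r * ‖y - x‖ := hfin
    _ = K * ‖y - x‖ ^ 3 := by rw [hr]; ring

end Helpers

section Euclid

variable {d : ℕ}


lemma setIntegral_ball_comp_isometry (e : EuclideanSpace ℝ (Fin d) ≃ₗᵢ[ℝ] EuclideanSpace ℝ (Fin d))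
    (F : EuclideanSpace ℝ (Fin d) → ℝ) (h : ℝ) :
    ∫ z in closedBall (0 : EuclideanSpace ℝ (Fin d)) h, F (e z) =
      ∫ z in closedBall (0 : EuclideanSpace ℝ (Fin d)) h, F z := by
  have hp := e.measurePreserving
  have hemb : MeasurableEmbedding e := e.toHomeomorph.measurableEmbedding
  have hpre : e ⁻¹' closedBall (0 : EuclideanSpace ℝ (Fin d)) h = closedBall 0 h := by
    ext z; simp [mem_closedBall_zero_iff, e.norm_map]
  calc ∫ z in closedBall (0 : EuclideanSpace ℝ (Fin d)) h, F (e z)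
      = ∫ z in e ⁻¹' closedBall (0 : EuclideanSpace ℝ (Fin d)) h, F (e z) := by rw [hpre]
    _ = _ := hp.setIntegral_preimage_emb hemb F _

lemma integral_ball_linear (L : EuclideanSpace ℝ (Fin d) →L[ℝ] ℝ) (h : ℝ) :
    ∫ z in closedBall (0 : EuclideanSpace ℝ (Fin d)) h, L z = 0 := by
  have := setIntegral_ball_comp_isometry (LinearIsometryEquiv.neg ℝ
    (E := EuclideanSpace ℝ (Fin d))) (fun z => L z) h
  simp only [LinearIsometryEquiv.coe_neg, map_neg] at this
  simp only [integral_neg] at this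
  linarith

lemma integral_ball_mul_self_eq (i j : Fin d) (h : ℝ) :
    ∫ z in closedBall (0 : EuclideanSpace ℝ (Fin d)) h, (z i)^2 =
      ∫ z in closedBall (0 : EuclideanSpace ℝ (Fin d)) h, (z j)^2 := by
  have := setIntegral_ball_comp_isometry
    (LinearIsometryEquiv.piLpCongrLeft 2 ℝ ℝ (Equiv.swap i j))
    (fun z => (z i)^2) h
  rw [← this]
  congr 1; funext z
  rw [LinearIsometryEquiv.piLpCongrLeft_apply]
  rw [Equiv.piCongrLeft'_apply, Equiv.symm_swap, Equiv.swap_apply_left]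

lemma integral_ball_offdiag (i j : Fin d) (hij : i ≠ j) (h : ℝ) :
    ∫ z in closedBall (0 : EuclideanSpace ℝ (Fin d)) h, (z i) * (z j) = 0 := by
  classical
  set e : EuclideanSpace ℝ (Fin d) ≃ₗᵢ[ℝ] EuclideanSpace ℝ (Fin d) :=
    LinearIsometryEquiv.piLpCongrRight 2
      (fun k : Fin d => if k = i then LinearIsometryEquiv.neg ℝ else LinearIsometryEquiv.refl ℝ ℝ)
  have he : ∀ (z : EuclideanSpace ℝ (Fin d)) (k : Fin d),
      e z k = if k = i then -(z k) else z k := by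
    intro z k
    simp only [e, LinearIsometryEquiv.piLpCongrRight_apply]
    by_cases hk : k = i
    · subst hk; simp
    · simp [hk]
  have := setIntegral_ball_comp_isometry e (fun z => (z i) * (z j)) h
  have h2 : ∀ z : EuclideanSpace ℝ (Fin d), (e z i) * (e z j) = -((z i) * (z j)) := by
    intro z; rw [he, he]; simp [hij.symm]
  simp only [h2, integral_neg] at this
  linarith


lemma sphereArea_eq (hd : 1 ≤ d) :
    sphereArea d = d * (volume (ball (0 : EuclideanSpace ℝ (Fin d)) 1)).toReal := by
  haveI : Nonempty (Fin d) := ⟨⟨0, hd⟩⟩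
  rw [sphereArea, Measure.toSphere_apply_univ, finrank_euclideanSpace_fin]
  rw [ENNReal.toReal_mul]
  simp

lemma integral_ball_normsq (hd : 1 ≤ d) {h : ℝ} (hh : 0 ≤ h) :
    ∫ z in closedBall (0 : EuclideanSpace ℝ (Fin d)) h, ‖z‖ ^ 2 =
      sphereArea d * h ^ (d + 2) / (d + 2) := by
  haveI : Nonempty (Fin d) := ⟨⟨0, hd⟩⟩
  set F : ℝ → ℝ := Set.indicator (Set.Icc 0 h) (fun r => r ^ 2) with hF
  have key := integral_fun_norm_addHaar (volume : Measure (EuclideanSpace ℝ (Fin d))) F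
  have h1 : ∀ z : EuclideanSpace ℝ (Fin d), F ‖z‖ =
      Set.indicator (closedBall (0:EuclideanSpace ℝ (Fin d)) h) (fun z => ‖z‖ ^ 2) z := by
    intro z
    by_cases hz : z ∈ closedBall (0:EuclideanSpace ℝ (Fin d)) h
    · rw [Set.indicator_of_mem hz]
      rw [mem_closedBall_zero_iff] at hz
      rw [hF, Set.indicator_of_mem (by exact ⟨norm_nonneg _, hz⟩)]
    · rw [Set.indicator_of_notMem hz, hF, Set.indicator_of_notMem]
      intro hmem
      exact hz (mem_closedBall_zero_iff.2 hmem.2)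
  simp only [h1] at key
  rw [integral_indicator (measurableSet_closedBall)] at key
  rw [key, finrank_euclideanSpace_fin]
  have h2 : ∀ y : ℝ, y ^ (d - 1) • F y =
      Set.indicator (Set.Icc (0:ℝ) h) (fun y => y ^ (d + 1)) y := by
    intro y
    by_cases hy : y ∈ Set.Icc (0:ℝ) h
    · rw [hF, Set.indicator_of_mem hy, Set.indicator_of_mem hy, smul_eq_mul, ← pow_add]
      congr 1
      omega
    · rw [hF, Set.indicator_of_notMem hy, Set.indicator_of_notMem hy, smul_zero]
  simp only [h2]
  rw [setIntegral_indicator measurableSet_Icc]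
  have h3 : Set.Ioi (0:ℝ) ∩ Set.Icc 0 h = Set.Ioc 0 h := by
    ext y
    simp only [Set.mem_inter_iff, Set.mem_Ioi, Set.mem_Icc, Set.mem_Ioc]
    constructor
    · rintro ⟨a, _, c⟩; exact ⟨a, c⟩
    · rintro ⟨a, c⟩; exact ⟨a, a.le, c⟩
  rw [h3]
  have h4 : ∫ y in Set.Ioc (0:ℝ) h, y ^ (d + 1) = h ^ (d + 2) / (d + 2) := by
    rw [← _root_.intervalIntegral.integral_of_le hh]
    rw [show (∫ x in (0:ℝ)..h, x ^ (d+1)) = (h ^ (d + 1 + 1) - 0 ^ (d + 1 + 1)) / ((d:ℝ) + 1 + 1) from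
      by push_cast [_root_.integral_pow (d+1)]; ring_nf]
    rw [zero_pow (by omega)]
    push_cast
    ring
  rw [h4, sphereArea_eq hd, nsmul_eq_mul, smul_eq_mul]
  rw [measureReal_def]; ring
lemma continuous_coord (i : Fin d) : Continuous (fun z : EuclideanSpace ℝ (Fin d) => z i) :=
  (EuclideanSpace.proj (𝕜 := ℝ) i).continuous

lemma integrableOn_ball_of_continuous {F : EuclideanSpace ℝ (Fin d) → ℝ} (hF : Continuous F)
    (h : ℝ) : IntegrableOn F (closedBall (0 : EuclideanSpace ℝ (Fin d)) h) :=
  hF.continuousOn.integrableOn_compact (isCompact_closedBall _ _)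

lemma integral_ball_coord_sq (hd : 1 ≤ d) (i : Fin d) {h : ℝ} (hh : 0 ≤ h) :
    ∫ z in closedBall (0 : EuclideanSpace ℝ (Fin d)) h, (z i)^2 =
      sphereArea d * h ^ (d + 2) / (d * (d + 2)) := by
  have hsum : (d : ℝ) * ∫ z in closedBall (0 : EuclideanSpace ℝ (Fin d)) h, (z i)^2 =
      sphereArea d * h ^ (d + 2) / (d + 2) := by
    rw [← integral_ball_normsq hd hh]
    have h1 : ∀ z : EuclideanSpace ℝ (Fin d), ‖z‖^2 = ∑ j : Fin d, (z j)^2 := by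
      intro z
      rw [EuclideanSpace.norm_eq]
      rw [Real.sq_sqrt (Finset.sum_nonneg fun j _ => sq_nonneg _)]
      simp [Real.norm_eq_abs, sq_abs]
    simp only [h1]
    rw [integral_finset_sum _ (fun j _ =>
      (integrableOn_ball_of_continuous (F := fun z => (z j)^2) ((continuous_coord j).pow 2) h))]
    have h2 : ∀ j : Fin d, (∫ z in closedBall (0 : EuclideanSpace ℝ (Fin d)) h, (z j)^2) =
        ∫ z in closedBall (0 : EuclideanSpace ℝ (Fin d)) h, (z i)^2 :=
      fun j => integral_ball_mul_self_eq j i h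
    rw [Finset.sum_congr rfl (fun j _ => h2 j), Finset.sum_const, Finset.card_univ,
      Fintype.card_fin, nsmul_eq_mul]
  have hd0 : (d : ℝ) ≠ 0 := by positivity
  field_simp at hsum ⊢
  linarith [hsum]

lemma integral_ball_bilin (hd : 1 ≤ d)
    (B : EuclideanSpace ℝ (Fin d) →L[ℝ] EuclideanSpace ℝ (Fin d) →L[ℝ] ℝ) {h : ℝ} (hh : 0 ≤ h) :
    ∫ z in closedBall (0 : EuclideanSpace ℝ (Fin d)) h, B z z =
      (∑ i : Fin d, B (EuclideanSpace.single i 1) (EuclideanSpace.single i 1)) *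
        (sphereArea d * h ^ (d + 2) / (d * (d + 2))) := by
  have hrepr : ∀ z : EuclideanSpace ℝ (Fin d),
      z = ∑ i : Fin d, z i • EuclideanSpace.single i (1:ℝ) := by
    intro z
    have := (EuclideanSpace.basisFun (Fin d) ℝ).sum_repr z
    simp only [EuclideanSpace.basisFun_apply, EuclideanSpace.basisFun_repr] at this
    exact this.symm
  have hexp : ∀ z : EuclideanSpace ℝ (Fin d), B z z =
      ∑ i : Fin d, ∑ j : Fin d,
        (z i * z j) * B (EuclideanSpace.single i 1) (EuclideanSpace.single j 1) := by
    intro z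
    conv_lhs => rw [hrepr z]
    simp only [map_sum, _root_.map_smul, ContinuousLinearMap.coe_sum', Finset.sum_apply,
      ContinuousLinearMap.coe_smul', Pi.smul_apply, ContinuousLinearMap.sum_apply,
      ContinuousLinearMap.smul_apply, smul_eq_mul]
    conv_rhs => rw [Finset.sum_comm]
    refine Finset.sum_congr rfl fun j _ => ?_
    rw [Finset.mul_sum]
    refine Finset.sum_congr rfl fun i _ => ?_
    ring
  have hstep : (∫ z in closedBall (0 : EuclideanSpace ℝ (Fin d)) h, B z z) =
      ∫ z in closedBall (0 : EuclideanSpace ℝ (Fin d)) h, ∑ i : Fin d, ∑ j : Fin d,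
        (z i * z j) * B (EuclideanSpace.single i 1) (EuclideanSpace.single j 1) :=
    setIntegral_congr_fun measurableSet_closedBall fun z _ => hexp z
  rw [hstep]
  have hint : ∀ i j : Fin d, IntegrableOn (fun z : EuclideanSpace ℝ (Fin d) =>
      (z i * z j) * B (EuclideanSpace.single i 1) (EuclideanSpace.single j 1))
      (closedBall 0 h) :=
    fun i j => integrableOn_ball_of_continuous
      (((continuous_coord i).mul (continuous_coord j)).mul continuous_const) h
  rw [integral_finset_sum _ (fun i _ => integrable_finset_sum _ (fun j _ => hint i j))]
  have hterm : ∀ i : Fin d,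
      (∫ z in closedBall (0 : EuclideanSpace ℝ (Fin d)) h, ∑ j : Fin d,
        (z i * z j) * B (EuclideanSpace.single i 1) (EuclideanSpace.single j 1)) =
      B (EuclideanSpace.single i 1) (EuclideanSpace.single i 1) *
        (sphereArea d * h ^ (d + 2) / (d * (d + 2))) := by
    intro i
    rw [integral_finset_sum _ (fun j _ => hint i j)]
    have : ∀ j : Fin d,
        (∫ z in closedBall (0 : EuclideanSpace ℝ (Fin d)) h,
          (z i * z j) * B (EuclideanSpace.single i 1) (EuclideanSpace.single j 1)) =
        if j = i then B (EuclideanSpace.single i 1) (EuclideanSpace.single i 1) *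
          (sphereArea d * h ^ (d + 2) / (d * (d + 2))) else 0 := by
      intro j
      rw [integral_mul_const]
      by_cases hji : j = i
      · subst hji
        rw [if_pos rfl]
        have : (fun z : EuclideanSpace ℝ (Fin d) => z j * z j) = fun z => (z j)^2 := by
          funext z; ring
        rw [this, integral_ball_coord_sq hd j hh]
        ring
      · rw [if_neg hji, integral_ball_offdiag i j (fun hij => hji hij.symm) h, zero_mul]
    rw [Finset.sum_congr rfl (fun j _ => this j), Finset.sum_ite_eq' Finset.univ i]
    simp
  rw [Finset.sum_congr rfl (fun i _ => hterm i), ← Finset.sum_mul]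


lemma setIntegral_ball_translate (x : EuclideanSpace ℝ (Fin d))
    (G : EuclideanSpace ℝ (Fin d) → ℝ) (h : ℝ) :
    ∫ y in closedBall x h, G (y - x) = ∫ z in closedBall (0 : EuclideanSpace ℝ (Fin d)) h, G z := by
  have hp : MeasurePreserving (fun z : EuclideanSpace ℝ (Fin d) => z + x) volume volume :=
    measurePreserving_add_right volume x
  have hemb : MeasurableEmbedding (fun z : EuclideanSpace ℝ (Fin d) => z + x) :=
    (Homeomorph.addRight x).measurableEmbedding
  have hpre : (fun z : EuclideanSpace ℝ (Fin d) => z + x) ⁻¹' closedBall x h = closedBall 0 h := by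
    ext z
    simp [mem_closedBall, dist_eq_norm]
  have := hp.setIntegral_preimage_emb hemb (fun y => G (y - x)) (closedBall x h)
  rw [hpre] at this
  rw [← this]
  congr 1
  funext z
  simp

variable {Ω : Set (EuclideanSpace ℝ (Fin d))} {x : EuclideanSpace ℝ (Fin d)}
  {f P : EuclideanSpace ℝ (Fin d) → ℝ}

lemma snd_deriv_prod (hΩ : IsOpen Ω) (hx : x ∈ Ω)
    (hf : ContDiffOn ℝ 3 f Ω) (hP : ContDiffOn ℝ 3 P Ω) (v w : EuclideanSpace ℝ (Fin d)) :
    fderiv ℝ (fderiv ℝ (fun y => (f y - f x) * P y)) x v w =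
      fderiv ℝ f x v * fderiv ℝ P x w + fderiv ℝ P x v * fderiv ℝ f x w +
        P x * fderiv ℝ (fderiv ℝ f) x v w := by
  set g : EuclideanSpace ℝ (Fin d) → ℝ := fun y => (f y - f x) * P y with hg
  have hfd : ∀ y ∈ Ω, HasFDerivAt g ((f y - f x) • fderiv ℝ P y + P y • fderiv ℝ f y) y := by
    intro y hy
    have hfy : HasFDerivAt f (fderiv ℝ f y) y :=
      (((hf y hy).contDiffAt (hΩ.mem_nhds hy)).differentiableAt (by norm_num)).hasFDerivAt
    have hPy : HasFDerivAt P (fderiv ℝ P y) y :=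
      (((hP y hy).contDiffAt (hΩ.mem_nhds hy)).differentiableAt (by norm_num)).hasFDerivAt
    exact (hfy.sub_const (f x)).mul hPy
  have heq : fderiv ℝ g =ᶠ[𝓝 x]
      fun y => (f y - f x) • fderiv ℝ P y + P y • fderiv ℝ f y := by
    filter_upwards [hΩ.mem_nhds hx] with y hy
    exact (hfd y hy).fderiv
  rw [heq.fderiv_eq]
  -- derivative of the explicit formula at x
  have hfx : HasFDerivAt f (fderiv ℝ f x) x :=
    (((hf x hx).contDiffAt (hΩ.mem_nhds hx)).differentiableAt (by norm_num)).hasFDerivAt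
  have hPx : HasFDerivAt P (fderiv ℝ P x) x :=
    (((hP x hx).contDiffAt (hΩ.mem_nhds hx)).differentiableAt (by norm_num)).hasFDerivAt
  have hf2 : HasFDerivAt (fderiv ℝ f) (fderiv ℝ (fderiv ℝ f) x) x := by
    have := ((hf x hx).contDiffAt (hΩ.mem_nhds hx)).fderiv_right (m := 2) (by norm_num)
    exact (this.differentiableAt (by norm_num)).hasFDerivAt
  have hP2 : HasFDerivAt (fderiv ℝ P) (fderiv ℝ (fderiv ℝ P) x) x := by
    have := ((hP x hx).contDiffAt (hΩ.mem_nhds hx)).fderiv_right (m := 2) (by norm_num)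
    exact (this.differentiableAt (by norm_num)).hasFDerivAt
  have hterm1 : HasFDerivAt (fun y => (f y - f x) • fderiv ℝ P y)
      ((fderiv ℝ f x).smulRight (fderiv ℝ P x)) x := by
    have := (hfx.sub_const (f x)).smul hP2
    simp only [sub_self, zero_smul, zero_add] at this; exact this
  have hterm2 : HasFDerivAt (fun y => P y • fderiv ℝ f y)
      (P x • fderiv ℝ (fderiv ℝ f) x + (fderiv ℝ P x).smulRight (fderiv ℝ f x)) x :=
    hPx.smul hf2
  have := (hterm1.add hterm2).fderiv
  rw [show (fun y => (f y - f x) • fderiv ℝ P y + P y • fderiv ℝ f y) = ((fun y => (f y - f x) • fderiv ℝ P y) + fun y => P y • fderiv ℝ f y) from rfl, this]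
  simp only [ContinuousLinearMap.add_apply,
    ContinuousLinearMap.smulRight_apply, ContinuousLinearMap.smul_apply,
    ContinuousLinearMap.coe_smul', Pi.smul_apply, smul_eq_mul]
  ring

lemma coeff_identity {Ω : Set (EuclideanSpace ℝ (Fin d))} {x : EuclideanSpace ℝ (Fin d)}
    {f P : EuclideanSpace ℝ (Fin d) → ℝ}
    (hΩ : IsOpen Ω) (hx : x ∈ Ω) (hf : ContDiffOn ℝ 3 f Ω) (hP : ContDiffOn ℝ 3 P Ω) :
    (1/2 : ℝ) * ∑ i : Fin d, fderiv ℝ (fderiv ℝ (fun y => (f y - f x) * P y)) x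
        (EuclideanSpace.single i 1) (EuclideanSpace.single i 1) =
      (1/2) * P x * laplacian f x + ⟪gradient f x, gradient P x⟫ := by
  have hlap : laplacian f x = ∑ i : Fin d,
      fderiv ℝ (fderiv ℝ f) x (EuclideanSpace.single i 1) (EuclideanSpace.single i 1) := by
    unfold laplacian
    refine Finset.sum_congr rfl fun i _ => ?_
    rw [iteratedFDeriv_two_apply]
    simp
  have hgrad : ∀ (q : EuclideanSpace ℝ (Fin d) → ℝ) (i : Fin d),
      gradient q x i = fderiv ℝ q x (EuclideanSpace.single i 1) := by
    intro q i
    calc gradient q x i = ⟪gradient q x, EuclideanSpace.single i (1:ℝ)⟫ := by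
          rw [EuclideanSpace.inner_single_right]; simp
      _ = fderiv ℝ q x (EuclideanSpace.single i 1) := by
          rw [gradient, InnerProductSpace.toDual_symm_apply]
  have hinner : ⟪gradient f x, gradient P x⟫ = ∑ i : Fin d,
      fderiv ℝ f x (EuclideanSpace.single i 1) * fderiv ℝ P x (EuclideanSpace.single i 1) := by
    rw [PiLp.inner_apply]
    refine Finset.sum_congr rfl fun i _ => ?_
    rw [hgrad f i, hgrad P i]
    simp; ring
  rw [Finset.sum_congr rfl (fun i _ => snd_deriv_prod hΩ hx hf hP
    (EuclideanSpace.single i 1) (EuclideanSpace.single i 1))]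
  rw [hlap, hinner]
  rw [Finset.sum_add_distrib, Finset.sum_add_distrib, ← Finset.mul_sum]
  have : ∀ i : Fin d, fderiv ℝ P x (EuclideanSpace.single i 1) *
      fderiv ℝ f x (EuclideanSpace.single i 1) =
      fderiv ℝ f x (EuclideanSpace.single i 1) * fderiv ℝ P x (EuclideanSpace.single i 1) :=
    fun i => mul_comm _ _
  rw [Finset.sum_congr rfl fun i _ => this i]
  ring

end Euclid

/-- As `h → 0⁺`,
`∫_{B_h(x)} (f(y) − f(x))·P(y) dy
  = (|S^{d-1}|/(d(d+2)))·((1/2)·P(x)·Δf(x) + ⟨∇f(x), ∇P(x)⟩)·h^{d+2} + O(h^{d+3})`. -/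
theorem local_moment_expansion_function_flat
    (d : ℕ) (hd : 1 ≤ d) (Ω : Set (EuclideanSpace ℝ (Fin d))) (hΩ : IsOpen Ω)
    (x : EuclideanSpace ℝ (Fin d)) (hx : x ∈ Ω)
    (f P : EuclideanSpace ℝ (Fin d) → ℝ)
    (hf : ContDiffOn ℝ 3 f Ω) (hP : ContDiffOn ℝ 3 P Ω) :
    (fun h : ℝ =>
        (∫ y in closedBall x h, (f y - f x) * P y)
          - sphereArea d / (d * (d + 2)) *
              ((1 / 2) * P x * laplacian f x + ⟪gradient f x, gradient P x⟫) *
              h ^ (d + 2))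
      =O[𝓝[>] (0 : ℝ)] fun h => h ^ (d + 3) := by
  classical
  set g : EuclideanSpace ℝ (Fin d) → ℝ := fun y => (f y - f x) * P y with hgdef
  have hgC3 : ContDiffAt ℝ 3 g x := by
    have h1 : ContDiffAt ℝ 3 f x := (hf x hx).contDiffAt (hΩ.mem_nhds hx)
    have h2 : ContDiffAt ℝ 3 P x := (hP x hx).contDiffAt (hΩ.mem_nhds hx)
    exact (h1.sub contDiffAt_const).mul h2
  obtain ⟨ε₀, hε₀, C, hC0, hC⟩ := taylor_order_two_bound hgC3
  obtain ⟨ε₁, hε₁, hballΩ⟩ := (Metric.nhds_basis_closedBall.mem_iff).1 (hΩ.mem_nhds hx)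
  set ε : ℝ := min ε₀ ε₁ with hεdef
  have hεpos : 0 < ε := lt_min hε₀ hε₁
  set A : EuclideanSpace ℝ (Fin d) →L[ℝ] ℝ := fderiv ℝ g x with hA
  set D2 : EuclideanSpace ℝ (Fin d) →L[ℝ] EuclideanSpace ℝ (Fin d) →L[ℝ] ℝ :=
    fderiv ℝ (fderiv ℝ g) x with hD2
  have hgx : g x = 0 := by simp [hgdef]
  have hcoef : (1/2 : ℝ) * ∑ i : Fin d,
      D2 (EuclideanSpace.single i 1) (EuclideanSpace.single i 1) =
      (1/2) * P x * laplacian f x + ⟪gradient f x, gradient P x⟫ :=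
    coeff_identity hΩ hx hf hP
  set V1 : ℝ := (volume (ball (0 : EuclideanSpace ℝ (Fin d)) 1)).toReal with hV1
  have hV1nn : 0 ≤ V1 := ENNReal.toReal_nonneg
  rw [isBigO_iff]
  refine ⟨C * V1, ?_⟩
  filter_upwards [Ioc_mem_nhdsGT_of_mem (Set.left_mem_Ico.2 hεpos)] with h hh
  obtain ⟨hh0, hhε⟩ := hh
  have hhε₀ : h ≤ ε₀ := hhε.trans (min_le_left _ _)
  have hhε₁ : h ≤ ε₁ := hhε.trans (min_le_right _ _)
  have hsubΩ : closedBall x h ⊆ Ω := (closedBall_subset_closedBall hhε₁).trans hballΩ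
  -- the quadratic model
  set T : EuclideanSpace ℝ (Fin d) → ℝ := fun z => A z + (1/2) * D2 z z with hT
  have hQcont : Continuous fun z : EuclideanSpace ℝ (Fin d) => D2 z z :=
    D2.isBoundedBilinearMap.continuous.comp (continuous_id.prodMk continuous_id)
  have hTcont : Continuous T := A.continuous.add (continuous_const.mul hQcont)
  -- integrability
  have hgcont : ContinuousOn g (closedBall x h) :=
    (((hf.sub contDiffOn_const).mul hP).continuousOn).mono hsubΩ
  have hgint : IntegrableOn g (closedBall x h) :=
    hgcont.integrableOn_compact (isCompact_closedBall _ _)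
  have hTint : IntegrableOn (fun y => T (y - x)) (closedBall x h) :=
    ((hTcont.comp (continuous_id.sub continuous_const)).continuousOn).integrableOn_compact
      (isCompact_closedBall _ _)
  -- exact value of the model integral
  have key1 : ∫ y in closedBall x h, T (y - x) =
      sphereArea d / (d * (d + 2)) *
        ((1/2) * P x * laplacian f x + ⟪gradient f x, gradient P x⟫) * h ^ (d + 2) := by
    rw [setIntegral_ball_translate x T h]
    have hintA : IntegrableOn (fun z => A z)
        (closedBall (0 : EuclideanSpace ℝ (Fin d)) h) :=
      (A.continuous.continuousOn).integrableOn_compact (isCompact_closedBall _ _)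
    have hintQ : IntegrableOn (fun z => (1/2 : ℝ) * D2 z z)
        (closedBall (0 : EuclideanSpace ℝ (Fin d)) h) :=
      ((continuous_const.mul hQcont).continuousOn).integrableOn_compact (isCompact_closedBall _ _)
    rw [hT]
    rw [integral_add hintA hintQ, integral_ball_linear A h, zero_add, integral_const_mul,
      integral_ball_bilin hd D2 hh0.le, ← hcoef]
    ring
  -- rewrite the target difference as a single integral
  have hrw : (∫ y in closedBall x h, (f y - f x) * P y) -
      sphereArea d / (↑d * (↑d + 2)) *
        (1 / 2 * P x * laplacian f x + ⟪gradient f x, gradient P x⟫) * h ^ (d + 2) =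
      ∫ y in closedBall x h, (g y - T (y - x)) := by
    rw [integral_sub hgint hTint, key1]
  rw [hrw]
  -- pointwise bound
  have hpt : ∀ y ∈ closedBall x h, ‖g y - T (y - x)‖ ≤ C * h ^ 3 := by
    intro y hy
    have hy₀ : y ∈ closedBall x ε₀ := closedBall_subset_closedBall hhε₀ hy
    have := hC y hy₀
    have hyx : ‖y - x‖ ≤ h := by rw [← dist_eq_norm]; exact mem_closedBall.1 hy
    have h3 : ‖y - x‖ ^ 3 ≤ h ^ 3 := pow_le_pow_left₀ (norm_nonneg _) hyx 3
    calc ‖g y - T (y - x)‖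
        = |g y - A (y - x) - (1/2) * D2 (y - x) (y - x) - g x| := by
          rw [hgx, hT, Real.norm_eq_abs]
          ring_nf
      _ ≤ C * ‖y - x‖ ^ 3 := this
      _ ≤ C * h ^ 3 := mul_le_mul_of_nonneg_left h3 hC0
  have hbound := norm_setIntegral_le_of_norm_le_const
    (measure_closedBall_lt_top (μ := volume) (x := x) (r := h)) hpt
  have hvol : (volume (closedBall x h)).toReal = h ^ d * V1 := by
    rw [Measure.addHaar_closedBall volume x hh0.le, ENNReal.toReal_mul,
      ENNReal.toReal_ofReal (by positivity), finrank_euclideanSpace_fin]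
  calc ‖∫ y in closedBall x h, (g y - T (y - x))‖
      ≤ C * h ^ 3 * (volume (closedBall x h)).toReal := hbound
    _ = C * V1 * h ^ (d + 3) := by rw [hvol]; ring
    _ ≤ C * V1 * ‖h ^ (d + 3)‖ := by
        rw [Real.norm_eq_abs, abs_of_pos (by positivity)]
end
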